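/- arXiv:1103.2312 — 6 statements merged into one kernel-verified Lean document; each statement's English description precedes it below -/
import Mathlib

section
/- Let E be a countable Borel equivalence relation on a standard Borel space X. If E is hyper-hyperfinite and Borel bounded, then E is hyperfinite. -/
open Filter

/-- Eventual equality on `ℕ → ℕ`. -/
def EvEq (α β : ℕ → ℕ) : Prop := ∀ᶠ n in Filter.atTop, α n = β n

/-- Eventual domination on `ℕ → ℕ`. -/
def EvLe (α β : ℕ → ℕ) : Prop := ∀ᶠ n in Filter.atTop, α n ≤ β n

/-- A finite Borel equivalence relation: a Borel equivalence relation all of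
whose classes are finite. -/
def FiniteBorelER {X : Type*} [MeasurableSpace X] (F : X → X → Prop) : Prop :=
  Equivalence F ∧ MeasurableSet {p : X × X | F p.1 p.2} ∧ ∀ x, {y | F x y}.Finite

/-- `E` is hyperfinite: an increasing union of finite Borel equivalence relations. -/
def Hyperfinite {X : Type*} [MeasurableSpace X] (E : X → X → Prop) : Prop :=
  ∃ F : ℕ → X → X → Prop, (∀ n, FiniteBorelER (F n)) ∧
    (∀ n x y, F n x y → F (n + 1) x y) ∧ (∀ x y, E x y ↔ ∃ n, F n x y)

/-- `E` is hyper-hyperfinite: an increasing union of hyperfinite Borel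
equivalence relations. -/
def HyperHyperfinite {X : Type*} [MeasurableSpace X] (E : X → X → Prop) : Prop :=
  ∃ G : ℕ → X → X → Prop, (∀ n, Hyperfinite (G n)) ∧
    (∀ n x y, G n x y → G (n + 1) x y) ∧ (∀ x y, E x y ↔ ∃ n, G n x y)

/-- `E` is Borel bounded: every Borel `φ : X → ℕ^ℕ` is eventually dominated by a
Borel homomorphism `ψ` from `E` to `=*`. -/
def BorelBounded {X : Type*} [MeasurableSpace X] (E : X → X → Prop) : Prop :=
  ∀ φ : X → ℕ → ℕ, Measurable φ →
    ∃ ψ : X → ℕ → ℕ, Measurable ψ ∧ (∀ x y, E x y → EvEq (ψ x) (ψ y)) ∧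
      ∀ x, EvLe (φ x) (ψ x)

section Aux

open Filter Set Function MeasureTheory PiNat

section Novikov

variable {α : Type*} [TopologicalSpace α] [T2Space α] [MeasurableSpace α] [OpensMeasurableSpace α]

/-- A countable family of sets can be "Borel-separated from having a common point". -/
def SepFam (S : ℕ → Set α) : Prop :=
  ∃ B : ℕ → Set α, (∀ n, S n ⊆ B n) ∧ (∀ n, MeasurableSet (B n)) ∧ (⋂ n, B n) = ∅

lemma SepFam.mono {S S' : ℕ → Set α} (h : SepFam S) (hsub : ∀ n, S' n ⊆ S n) : SepFam S' := by
  obtain ⟨B, h1, h2, h3⟩ := h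
  exact ⟨B, fun n => (hsub n).trans (h1 n), h2, h3⟩

lemma sepFam_of_update {S : ℕ → Set α} {n : ℕ} {T : ℕ → Set α} (hS : S n ⊆ ⋃ i, T i)
    (h : ∀ i, SepFam (Function.update S n (T i))) : SepFam S := by
  classical
  choose B hB1 hB2 hB3 using h
  refine ⟨fun m => if m = n then ⋃ i, B i n else ⋂ i, B i m, ?_, ?_, ?_⟩
  · intro m
    by_cases hm : m = n
    · subst hm
      simp only [if_pos rfl]
      refine hS.trans (Set.iUnion_mono fun i => ?_)
      have := hB1 i m
      rwa [Function.update_self] at this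
    · simp only [if_neg hm]
      refine Set.subset_iInter fun i => ?_
      have := hB1 i m
      rwa [Function.update_of_ne hm] at this
  · intro m
    by_cases hm : m = n
    · simp only [if_pos hm]
      exact MeasurableSet.iUnion fun i => hB2 i n
    · simp only [if_neg hm]
      exact MeasurableSet.iInter fun i => hB2 i m
  · rw [Set.eq_empty_iff_forall_notMem]
    intro w hw
    have hwn := Set.mem_iInter.1 hw n
    rw [if_pos rfl] at hwn
    obtain ⟨i, hi⟩ := Set.mem_iUnion.1 hwn
    have : w ∈ ⋂ m, B i m := by
      refine Set.mem_iInter.2 fun m => ?_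
      by_cases hm : m = n
      · subst hm; exact hi
      · have := Set.mem_iInter.1 hw m
        rw [if_neg hm] at this
        exact Set.mem_iInter.1 this i
    rw [hB3 i] at this
    exact this

/-- Novikov's countable separation theorem: countably many analytic sets with empty
intersection can be enlarged to Borel sets with empty intersection. -/
theorem sepFam_of_analytic_of_iInter_empty {A : ℕ → Set α} (hA : ∀ n, AnalyticSet (A n))
    (hempty : (⋂ n, A n) = ∅) : SepFam A := by
  classical
  by_cases hne : ∀ n, (A n).Nonempty
  swap
  · push_neg at hne
    obtain ⟨n₀, h₀⟩ := hne
    refine ⟨fun m => if m = n₀ then ∅ else univ, ?_, ?_, ?_⟩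
    · intro m
      by_cases hm : m = n₀
      · subst hm; simp [h₀]
      · simp [hm]
    · intro m
      by_cases hm : m = n₀ <;> simp [hm]
    · rw [Set.eq_empty_iff_forall_notMem]
      intro w hw
      have := Set.mem_iInter.1 hw n₀
      rw [if_pos rfl] at this
      exact this
  have hrep : ∀ n, ∃ f : (ℕ → ℕ) → α, Continuous f ∧ range f = A n := by
    intro n
    have h := hA n
    rw [AnalyticSet] at h
    rcases h with h | h
    · exact absurd (hne n) (by rw [h]; exact Set.not_nonempty_empty)
    · exact h
  choose f hfc hfr using hrep
  by_contra hsep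
  set Fam : (ℕ → (ℕ → ℕ) × ℕ) → ℕ → Set α := fun c n => f n '' cylinder (c n).1 (c n).2
    with hFamdef
  have step : ∀ c : ℕ → (ℕ → ℕ) × ℕ, ¬ SepFam (Fam c) → ∀ n, ∃ x',
      x' ∈ cylinder (c n).1 (c n).2 ∧
      ¬ SepFam (Fam (Function.update c n (x', (c n).2 + 1))) := by
    intro c hc n
    by_contra h
    push_neg at h
    apply hc
    refine sepFam_of_update (n := n)
      (T := fun i => f n '' cylinder (update (c n).1 (c n).2 i) ((c n).2 + 1)) ?_ ?_
    · intro w hw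
      simp only [hFamdef] at hw
      rw [← iUnion_cylinder_update (c n).1 (c n).2, image_iUnion] at hw
      exact hw
    · intro i
      have hx' := h (update (c n).1 (c n).2 i) (update_mem_cylinder _ _ _)
      have heq : Function.update (Fam c) n
          (f n '' cylinder (update (c n).1 (c n).2 i) ((c n).2 + 1)) =
          Fam (Function.update c n (update (c n).1 (c n).2 i, (c n).2 + 1)) := by
        funext m
        by_cases hm : m = n
        · subst hm
          rw [Function.update_self, hFamdef]
          simp only [Function.update_self]
        · rw [Function.update_of_ne hm, hFamdef]
          simp only [Function.update_of_ne hm]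
      rw [heq]
      exact hx'
  have hc0 : ¬ SepFam (Fam fun _ => ((fun _ => 0), 0)) := by
    intro hs
    apply hsep
    have hA' : Fam (fun _ => ((fun _ => 0), 0)) = A := by
      funext n
      rw [hFamdef]
      simp only [cylinder_zero, image_univ, hfr]
    rwa [hA'] at hs
  set Cfg := {c : ℕ → (ℕ → ℕ) × ℕ // ¬ SepFam (Fam c)} with hCfg
  have key : ∀ (p : Cfg) (n : ℕ), ∃ (q : Cfg) (x' : ℕ → ℕ),
      x' ∈ cylinder (p.1 n).1 (p.1 n).2 ∧
      q.1 = Function.update p.1 n (x', (p.1 n).2 + 1) := by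
    intro p n
    obtain ⟨x', hx1, hx2⟩ := step p.1 p.2 n
    exact ⟨⟨Function.update p.1 n (x', (p.1 n).2 + 1), hx2⟩, x', hx1, rfl⟩
  choose Fn xn hxmem hFn using key
  let e : ℕ → ℕ := fun k => (Nat.unpair k).1
  let p : ℕ → Cfg := fun k => Nat.rec ⟨_, hc0⟩ (fun k pk => Fn pk (e k)) k
  have hp : ∀ k, p (k + 1) = Fn (p k) (e k) := fun k => rfl
  set L : ℕ → ℕ → ℕ := fun k n => ((p k).1 n).2 with hL
  set P : ℕ → ℕ → ℕ → ℕ := fun k n => ((p k).1 n).1 with hP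
  have hsucc : ∀ k n, (p (k + 1)).1 n =
      if n = e k then (xn (p k) (e k), L k (e k) + 1) else (p k).1 n := by
    intro k n
    rw [hp, hFn]
    by_cases hn : n = e k
    · subst hn; rw [Function.update_self, if_pos rfl]
    · rw [Function.update_of_ne hn, if_neg hn]
  have hLsucc : ∀ k n, L (k + 1) n = if n = e k then L k n + 1 else L k n := by
    intro k n
    rw [hL]
    simp only
    rw [hsucc]
    by_cases hn : n = e k
    · subst hn; simp; rfl
    · simp [hn]
  have hLle : ∀ k n, L k n ≤ L (k + 1) n := by
    intro k n
    rw [hLsucc]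
    by_cases hn : n = e k <;> simp [hn]
  have hLmono : ∀ n k k', k ≤ k' → L k n ≤ L k' n := by
    intro n k k' hk
    induction hk with
    | refl => exact le_rfl
    | step h ih => exact le_trans ih (hLle _ _)
  have hPmem : ∀ k n, P (k + 1) n ∈ cylinder (P k n) (L k n) := by
    intro k n
    rw [hP]
    simp only
    rw [hsucc]
    by_cases hn : n = e k
    · rw [if_pos hn]
      subst hn
      exact hxmem (p k) (e k)
    · rw [if_neg hn]
      exact self_mem_cylinder _ _
  have hstab : ∀ n i k k', k ≤ k' → i < L k n → P k' n i = P k n i := by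
    intro n i k k' hk hi
    induction hk with
    | refl => rfl
    | @step k' h ih =>
      have h1 : P (k' + 1) n i = P k' n i :=
        mem_cylinder_iff.1 (hPmem k' n) i (lt_of_lt_of_le hi (hLmono n k k' h))
      rw [h1, ih]
  have hunbdd : ∀ n M, ∃ k, M ≤ L k n := by
    intro n M
    induction M with
    | zero => exact ⟨0, Nat.zero_le _⟩
    | succ M ih =>
      obtain ⟨k, hk⟩ := ih
      refine ⟨Nat.pair n k + 1, ?_⟩
      have he : e (Nat.pair n k) = n := by simp [e]
      have h1 : L (Nat.pair n k + 1) n = L (Nat.pair n k) n + 1 := by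
        rw [hLsucc, if_pos he.symm]
      have h2 : L k n ≤ L (Nat.pair n k) n := hLmono n k _ (Nat.right_le_pair n k)
      omega
  have hK : ∀ n i, ∃ k, i + 1 ≤ L k n := fun n i => hunbdd n (i + 1)
  choose K hKspec using hK
  set xlim : ℕ → ℕ → ℕ := fun n i => P (K n i) n i with hxlim
  have hagree : ∀ n k i, i < L k n → P k n i = xlim n i := by
    intro n k i hi
    have h1 : P (max k (K n i)) n i = P k n i := hstab n i k _ (le_max_left _ _) hi
    have h2 : P (max k (K n i)) n i = P (K n i) n i :=
      hstab n i (K n i) _ (le_max_right _ _) (lt_of_lt_of_le (Nat.lt_succ_self i) (hKspec n i))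
    rw [hxlim]
    simp only
    rw [← h2, h1]
  have hcylincl : ∀ n k M, M ≤ L k n →
      f n '' cylinder (P k n) (L k n) ⊆ f n '' cylinder (xlim n) M := by
    intro n k M hM
    apply image_mono
    intro y hy
    rw [mem_cylinder_iff] at hy ⊢
    intro i hi
    rw [hy i (lt_of_lt_of_le hi hM), hagree n k i (lt_of_lt_of_le hi hM)]
  by_cases hz : ∃ a b, f a (xlim a) ≠ f b (xlim b)
  · obtain ⟨a, b, hab⟩ := hz
    have hne' : a ≠ b := by
      intro h
      subst h
      exact hab rfl
    obtain ⟨u, v, uo, vo, hu, hv, huv⟩ := t2_separation hab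
    letI : MetricSpace (ℕ → ℕ) := metricSpaceNatNat
    obtain ⟨εa, εapos, hεa⟩ : ∃ εa : ℝ, εa > 0 ∧ Metric.ball (xlim a) εa ⊆ f a ⁻¹' u := by
      apply Metric.mem_nhds_iff.1
      exact (hfc a).continuousAt.preimage_mem_nhds (uo.mem_nhds hu)
    obtain ⟨εb, εbpos, hεb⟩ : ∃ εb : ℝ, εb > 0 ∧ Metric.ball (xlim b) εb ⊆ f b ⁻¹' v := by
      apply Metric.mem_nhds_iff.1
      exact (hfc b).continuousAt.preimage_mem_nhds (vo.mem_nhds hv)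
    obtain ⟨M, hM⟩ : ∃ M : ℕ, (1 / 2 : ℝ) ^ M < min εa εb :=
      exists_pow_lt_of_lt_one (lt_min εapos εbpos) (by norm_num)
    have hua : f a '' cylinder (xlim a) M ⊆ u := by
      rintro w ⟨y, hy, rfl⟩
      apply hεa
      rw [Metric.mem_ball]
      exact lt_of_le_of_lt (mem_cylinder_iff_dist_le.1 hy)
        (lt_of_lt_of_le hM (min_le_left _ _))
    have hvb : f b '' cylinder (xlim b) M ⊆ v := by
      rintro w ⟨y, hy, rfl⟩
      apply hεb
      rw [Metric.mem_ball]
      exact lt_of_le_of_lt (mem_cylinder_iff_dist_le.1 hy)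
        (lt_of_lt_of_le hM (min_le_right _ _))
    obtain ⟨ka, hka⟩ := hunbdd a M
    obtain ⟨kb, hkb⟩ := hunbdd b M
    apply (p (max ka kb)).2
    refine ⟨fun m => if m = a then u else if m = b then v else univ, ?_, ?_, ?_⟩
    · intro m
      dsimp only
      by_cases hma : m = a
      · subst hma
        rw [if_pos rfl]
        exact (hcylincl m _ M (le_trans hka (hLmono m ka _ (le_max_left _ _)))).trans hua
      · rw [if_neg hma]
        by_cases hmb : m = b
        · subst hmb
          rw [if_pos rfl]
          exact (hcylincl m _ M (le_trans hkb (hLmono m kb _ (le_max_right _ _)))).trans hvb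
        · rw [if_neg hmb]
          exact subset_univ _
    · intro m
      dsimp only
      by_cases hma : m = a
      · simp [hma, uo.measurableSet]
      · by_cases hmb : m = b <;> simp [hma, hmb, Ne.symm hne', uo.measurableSet, vo.measurableSet]
    · rw [Set.eq_empty_iff_forall_notMem]
      intro w hw
      have hwa := Set.mem_iInter.1 hw a
      have hwb := Set.mem_iInter.1 hw b
      rw [if_pos rfl] at hwa
      rw [if_neg (Ne.symm hne'), if_pos rfl] at hwb
      exact Set.disjoint_left.1 huv hwa hwb
  · push_neg at hz
    have : f 0 (xlim 0) ∈ ⋂ n, A n := by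
      refine Set.mem_iInter.2 fun n => ?_
      rw [hz 0 n, ← hfr n]
      exact mem_range_self _
    rw [hempty] at this
    exact this

end Novikov

/-- From a countable family of Borel "bad pair" sets, each of which is avoided at some level
by every point, one can measurably select an avoiding level. -/
lemma exists_measurable_index {X : Type*} [MeasurableSpace X] [StandardBorelSpace X]
    (S : ℕ → Set (X × X)) (hS : ∀ M, MeasurableSet (S M))
    (hcov : ∀ x, ∃ M, ∀ z, (x, z) ∉ S M) :
    ∃ u : X → ℕ, Measurable u ∧ ∀ x z, (x, z) ∉ S (u x) := by
  classical
  letI := upgradeStandardBorel X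
  have hAn : ∀ M, AnalyticSet (Prod.fst '' S M) := fun M =>
    (hS M).analyticSet_image measurable_fst
  have hempty : (⋂ M, Prod.fst '' S M) = ∅ := by
    rw [Set.eq_empty_iff_forall_notMem]
    intro x hx
    obtain ⟨M, hM⟩ := hcov x
    obtain ⟨⟨x', z⟩, hmem, hx'⟩ := Set.mem_iInter.1 hx M
    cases hx'
    exact hM z hmem
  obtain ⟨B, hB1, hB2, hB3⟩ := sepFam_of_analytic_of_iInter_empty hAn hempty
  have hex : ∀ x, ∃ M, x ∉ B M := by
    intro x
    by_contra h
    push_neg at h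
    have : x ∈ ⋂ M, B M := Set.mem_iInter.2 h
    rw [hB3] at this
    exact this
  refine ⟨fun x => Nat.find (hex x), ?_, ?_⟩
  · apply measurable_to_countable'
    intro M
    have : (fun x => Nat.find (hex x)) ⁻¹' {M} = (B M)ᶜ ∩ ⋂ j, ⋂ (_ : j < M), B j := by
      ext x
      simp only [Set.mem_preimage, Set.mem_singleton_iff, Nat.find_eq_iff, Set.mem_inter_iff,
        Set.mem_compl_iff, Set.mem_iInter]
      constructor
      · rintro ⟨h1, h2⟩
        exact ⟨h1, fun j hj => not_not.1 (h2 j hj)⟩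
      · rintro ⟨h1, h2⟩
        exact ⟨h1, fun j hj => not_not.2 (h2 j hj)⟩
    rw [this]
    exact ((hB2 M).compl.inter (MeasurableSet.iInter fun j =>
      MeasurableSet.iInter fun _ => hB2 j))
  · intro x z hmem
    exact Nat.find_spec (hex x) (hB1 _ ⟨(x, z), hmem, rfl⟩)

end Aux

/-- If a countable Borel equivalence relation `E` on a standard Borel space is
hyper-hyperfinite and Borel bounded, then `E` is hyperfinite. -/
theorem hyperfinite_of_hyperHyperfinite_of_borelBounded
    {X : Type*} [MeasurableSpace X] [StandardBorelSpace X]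
    (E : X → X → Prop) (hEq : Equivalence E)
    (hBorel : MeasurableSet {p : X × X | E p.1 p.2})
    (hCtble : ∀ x, {y | E x y}.Countable)
    (hhh : HyperHyperfinite E) (hbb : BorelBounded E) :
    Hyperfinite E := by
  classical
  obtain ⟨G, hGhyp, hGmono, hGE⟩ := hhh
  choose F hFfin hFmono hFG using hGhyp
  have hFle : ∀ n a b, a ≤ b → ∀ x y, F n a x y → F n b x y := by
    intro n a b hab x y h
    induction hab with
    | refl => exact h
    | step _ ih => exact hFmono n _ x y ih
  have hGle : ∀ a b, a ≤ b → ∀ x y, G a x y → G b x y := by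
    intro a b hab x y h
    induction hab with
    | refl => exact h
    | step _ ih => exact hGmono _ x y ih
  have hGgraph : ∀ n, MeasurableSet {p : X × X | G n p.1 p.2} := by
    intro n
    have : {p : X × X | G n p.1 p.2} = ⋃ m, {p : X × X | F n m p.1 p.2} := by
      ext p
      simp only [Set.mem_setOf_eq, Set.mem_iUnion]
      exact hFG n p.1 p.2
    rw [this]
    exact MeasurableSet.iUnion fun m => (hFfin n m).2.1
  have hGrefl : ∀ n x, G n x x := fun n x => (hFG n x x).2 ⟨0, (hFfin n 0).1.refl x⟩
  -- measurable index functions dominating indices of classmates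
  have hu : ∀ q : ℕ × ℕ × ℕ, ∃ u : X → ℕ, Measurable u ∧
      ∀ x z, ¬(F q.1 q.2.1 x z ∧ G q.2.2 x z ∧ ¬ F q.2.2 (u x) x z) := by
    rintro ⟨n, m, j⟩
    have hS : ∀ M : ℕ,
        MeasurableSet {p : X × X | F n m p.1 p.2 ∧ G j p.1 p.2 ∧ ¬ F j M p.1 p.2} :=
      fun M => ((hFfin n m).2.1).inter ((hGgraph j).inter ((hFfin j M).2.1.compl))
    have hcov : ∀ x, ∃ M, ∀ z,
        (x, z) ∉ {p : X × X | F n m p.1 p.2 ∧ G j p.1 p.2 ∧ ¬ F j M p.1 p.2} := by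
      intro x
      have hTfin : {z | F n m x z ∧ G j x z}.Finite :=
        ((hFfin n m).2.2 x).subset fun z hz => hz.1
      have hMex : ∀ z ∈ {z | F n m x z ∧ G j x z}, ∃ M, F j M x z :=
        fun z hz => (hFG j x z).1 hz.2
      let d : X → ℕ := fun z => if h : ∃ M, F j M x z then Nat.find h else 0
      refine ⟨hTfin.toFinset.sup d, fun z hz => ?_⟩
      simp only [Set.mem_setOf_eq] at hz
      have hzT : z ∈ {z | F n m x z ∧ G j x z} := ⟨hz.1, hz.2.1⟩
      have hex : ∃ M', F j M' x z := hMex z hzT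
      have hd : F j (d z) x z := by
        simp only [d, dif_pos hex]
        exact Nat.find_spec hex
      have hdle : d z ≤ hTfin.toFinset.sup d :=
        Finset.le_sup (hTfin.mem_toFinset.2 hzT)
      exact hz.2.2 (hFle j (d z) _ hdle x z hd)
    obtain ⟨u, hu1, hu2⟩ := exists_measurable_index _ hS hcov
    exact ⟨u, hu1, fun x z h => hu2 x z h⟩
  choose u humeas huspec using hu
  set φ : X → ℕ → ℕ :=
    fun x j => ∑ n ∈ Finset.range (j + 1), ∑ m ∈ Finset.range (j + 1), u (n, m, j) x with hφ
  have hφmeas : Measurable φ := by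
    apply measurable_pi_lambda
    intro j
    apply Finset.measurable_sum
    intro n _
    apply Finset.measurable_sum
    intro m _
    exact humeas (n, m, j)
  obtain ⟨ψ, hψmeas, hψhom, hψdom⟩ := hbb φ hφmeas
  set H : ℕ → X → X → Prop := fun N x y =>
    G N x y ∧ ∀ j, N ≤ j → ψ x j = ψ y j ∧ F j (ψ x j) x y with hHdef
  have heqfun : ∀ f g : X × X → ℕ, Measurable f → Measurable g →
      MeasurableSet {p : X × X | f p = g p} := by
    intro f g hf hg
    have : {p : X × X | f p = g p} = ⋃ M, f ⁻¹' {M} ∩ g ⁻¹' {M} := by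
      ext p
      simp only [Set.mem_setOf_eq, Set.mem_iUnion, Set.mem_inter_iff, Set.mem_preimage,
        Set.mem_singleton_iff]
      constructor
      · intro h
        exact ⟨f p, rfl, h.symm⟩
      · rintro ⟨M, h1, h2⟩
        exact h1.trans h2.symm
    rw [this]
    exact MeasurableSet.iUnion fun M =>
      (hf (measurableSet_singleton M)).inter (hg (measurableSet_singleton M))
  refine ⟨H, ?_, ?_, ?_⟩
  · intro N
    refine ⟨?_, ?_, ?_⟩
    · constructor
      · intro x
        exact ⟨hGrefl N x, fun j _ => ⟨rfl, (hFfin j (ψ x j)).1.refl x⟩⟩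
      · intro x y hxy
        obtain ⟨h1, h2⟩ := hxy
        obtain ⟨m₁, hm₁⟩ := (hFG N x y).1 h1
        refine ⟨(hFG N y x).2 ⟨m₁, (hFfin N m₁).1.symm hm₁⟩, fun j hj => ?_⟩
        obtain ⟨ha, hb⟩ := h2 j hj
        refine ⟨ha.symm, ?_⟩
        rw [← ha]
        exact (hFfin j (ψ x j)).1.symm hb
      · intro x y z hxy hyz
        obtain ⟨h1, h2⟩ := hxy
        obtain ⟨h1', h2'⟩ := hyz
        obtain ⟨m₁, hm₁⟩ := (hFG N x y).1 h1
        obtain ⟨m₂, hm₂⟩ := (hFG N y z).1 h1'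
        refine ⟨(hFG N x z).2 ⟨max m₁ m₂, (hFfin N (max m₁ m₂)).1.trans
          (hFle N m₁ _ (le_max_left _ _) x y hm₁)
          (hFle N m₂ _ (le_max_right _ _) y z hm₂)⟩, fun j hj => ?_⟩
        obtain ⟨ha, hb⟩ := h2 j hj
        obtain ⟨ha', hb'⟩ := h2' j hj
        refine ⟨ha.trans ha', ?_⟩
        rw [ha] at hb ⊢
        rw [ha'] at hb ⊢
        rw [ha'] at hb'
        exact (hFfin j (ψ z j)).1.trans hb hb'
    · have : {p : X × X | H N p.1 p.2} = {p : X × X | G N p.1 p.2} ∩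
          ⋂ j, ⋂ (_ : N ≤ j), ({p : X × X | ψ p.1 j = ψ p.2 j} ∩
            ⋃ M, ({p : X × X | ψ p.1 j = M} ∩ {p : X × X | F j M p.1 p.2})) := by
        ext p
        simp only [hHdef, Set.mem_setOf_eq, Set.mem_inter_iff, Set.mem_iInter, Set.mem_iUnion]
        constructor
        · rintro ⟨h1, h2⟩
          exact ⟨h1, fun j hj => ⟨(h2 j hj).1, ψ p.1 j, rfl, (h2 j hj).2⟩⟩
        · rintro ⟨h1, h2⟩
          refine ⟨h1, fun j hj => ⟨(h2 j hj).1, ?_⟩⟩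
          obtain ⟨M, hM1, hM2⟩ := (h2 j hj).2
          rwa [hM1]
      rw [this]
      refine (hGgraph N).inter (MeasurableSet.iInter fun j => MeasurableSet.iInter fun _ => ?_)
      have hf1 : Measurable fun p : X × X => ψ p.1 j :=
        (measurable_pi_apply j).comp (hψmeas.comp measurable_fst)
      have hf2 : Measurable fun p : X × X => ψ p.2 j :=
        (measurable_pi_apply j).comp (hψmeas.comp measurable_snd)
      refine (heqfun _ _ hf1 hf2).inter (MeasurableSet.iUnion fun M => ?_)
      exact (hf1 (measurableSet_singleton M)).inter ((hFfin j M).2.1)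
    · intro x
      refine Set.Finite.subset ((hFfin N (ψ x N)).2.2 x) fun y hy => ?_
      exact (hy.2 N le_rfl).2
  · rintro N x y ⟨h1, h2⟩
    exact ⟨hGmono N x y h1, fun j hj => h2 j (le_trans (Nat.le_succ N) hj)⟩
  · intro x y
    constructor
    · intro hExy
      obtain ⟨n₁, hn₁⟩ := (hGE x y).1 hExy
      obtain ⟨m₁, hm₁⟩ := (hFG n₁ x y).1 hn₁
      obtain ⟨N₂, hN₂⟩ := Filter.eventually_atTop.1 (hψhom x y hExy)
      obtain ⟨N₃, hN₃⟩ := Filter.eventually_atTop.1 (hψdom x)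
      refine ⟨max (max n₁ m₁) (max N₂ N₃), hGle n₁ _
        (le_trans (le_max_left _ _) (le_max_left _ _)) x y hn₁, fun j hj => ?_⟩
      have hn₁j : n₁ ≤ j := le_trans (le_trans (le_max_left _ _) (le_max_left _ _)) hj
      have hm₁j : m₁ ≤ j := le_trans (le_trans (le_max_right _ _) (le_max_left _ _)) hj
      have hψeq : ψ x j = ψ y j :=
        hN₂ j (le_trans (le_trans (le_max_left _ _) (le_max_right _ _)) hj)
      refine ⟨hψeq, ?_⟩
      have hGj : G j x y := hGle n₁ j hn₁j x y hn₁
      have hFj : F j (u (n₁, m₁, j) x) x y := by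
        by_contra hcon
        exact huspec (n₁, m₁, j) x y ⟨hm₁, hGj, hcon⟩
      have hle1 : u (n₁, m₁, j) x ≤ φ x j := by
        have h1 : u (n₁, m₁, j) x ≤ ∑ m ∈ Finset.range (j + 1), u (n₁, m, j) x :=
          Finset.single_le_sum (f := fun m => u (n₁, m, j) x) (fun i _ => Nat.zero_le _)
            (Finset.mem_range.2 (Nat.lt_succ_of_le hm₁j))
        have h2 : (∑ m ∈ Finset.range (j + 1), u (n₁, m, j) x) ≤ φ x j :=
          Finset.single_le_sum (f := fun n => ∑ m ∈ Finset.range (j + 1), u (n, m, j) x)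
            (fun i _ => Nat.zero_le _) (Finset.mem_range.2 (Nat.lt_succ_of_le hn₁j))
        exact le_trans h1 h2
      have hle2 : φ x j ≤ ψ x j :=
        hN₃ j (le_trans (le_trans (le_max_right _ _) (le_max_right _ _)) hj)
      exact hFle j _ _ (le_trans hle1 hle2) x y hFj
    · rintro ⟨N, h1, _⟩
      exact (hGE x y).2 ⟨N, h1⟩
end

section
/- The relation E_0 of eventual equality on 2^ℕ is not invariantly Borel bounded: there exists a Borel function φ : 2^ℕ → ℕ^ℕ (for instance, φ(x) = the increasing enumeration of x when x ⊆ ℕ is infinite, and the constant zero function otherwise) such that there is no E_0-invariant Borel function ψ : 2^ℕ → ℕ^ℕ with φ(x) ≤* ψ(x) for all x ∈ 2^ℕ. -/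
open Filter

/-- Eventual equality (`E₀`) on `2^ℕ`. -/
def E0 (x y : ℕ → Bool) : Prop := ∀ᶠ n in Filter.atTop, x n = y n

namespace E0Aux

open Set

/-- Flipping coordinates according to `d`, as a homeomorphism of `2^ℕ`. -/
def flipH (d : ℕ → Bool) : (ℕ → Bool) ≃ₜ (ℕ → Bool) where
  toFun x := fun n => xor (x n) (d n)
  invFun x := fun n => xor (x n) (d n)
  left_inv x := funext fun n => by simp [Bool.xor_assoc]
  right_inv x := funext fun n => by simp [Bool.xor_assoc]
  continuous_toFun := continuous_pi fun n =>
    (continuous_of_discreteTopology (f := fun b : Bool => xor b (d n))).comp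
      (continuous_apply n)
  continuous_invFun := continuous_pi fun n =>
    (continuous_of_discreteTopology (f := fun b : Bool => xor b (d n))).comp
      (continuous_apply n)

lemma e0_of_eq_of_large {x y : ℕ → Bool} {L : ℕ} (h : ∀ n, L ≤ n → x n = y n) :
    E0 x y := eventually_atTop.2 ⟨L, h⟩

/-- Topological zero–one law for `E₀`: an invariant Baire measurable set is
meager or comeager. -/
lemma meager_or_comeager {A : Set (ℕ → Bool)} (hA : BaireMeasurableSet A)
    (hinv : ∀ x y, E0 x y → (x ∈ A ↔ y ∈ A)) :
    IsMeagre A ∨ A ∈ residual (ℕ → Bool) := by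
  obtain ⟨U, hUo, hAU⟩ := hA.residualEq_isOpen
  rw [Filter.eventuallyEq_set] at hAU
  rcases eq_empty_or_nonempty U with rfl | ⟨x0, hx0⟩
  · left
    exact Filter.mem_of_superset hAU fun x hx hxA => Set.notMem_empty x (hx.mp hxA)
  · right
    obtain ⟨I, u, hu, hpi⟩ := isOpen_pi_iff.1 hUo x0 hx0
    set C : Set (ℕ → Bool) := {x | ∀ i ∈ I, x i = x0 i} with hC
    have hCU : C ⊆ U := by
      intro x hx
      apply hpi
      intro i hi
      rw [hx i hi]
      exact (hu i hi).2
    -- C \ A is meager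
    have hmeag : IsMeagre (C \ A) := by
      refine Filter.mem_of_superset hAU ?_
      intro x hx hxCA
      exact hxCA.2 (hx.mpr (hCU hxCA.1))
    -- Aᶜ is covered by countably many homeomorphic copies of C \ A
    have hcover : Aᶜ ⊆ ⋃ K : Finset ℕ,
        (flipH (fun i => decide (i ∈ K))) ⁻¹' (C \ A) := by
      intro x hx
      set K : Finset ℕ := I.filter (fun i => x i ≠ x0 i) with hK
      refine mem_iUnion.2 ⟨K, ?_⟩
      set d : ℕ → Bool := fun i => decide (i ∈ K) with hd
      set x' : ℕ → Bool := fun i => xor (x i) (d i) with hx'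
      have hmemK : ∀ i, i ∈ K ↔ (i ∈ I ∧ x i ≠ x0 i) := by
        intro i; simp [hK]
      have hx'C : x' ∈ C := by
        intro i hi
        by_cases hne : x i = x0 i
        · have : d i = false := by
            simp only [hd, decide_eq_false_iff_not, hmemK]
            tauto
          simp [hx', this, hne]
        · have : d i = true := by
            simp only [hd, decide_eq_true_eq, hmemK]
            exact ⟨hi, hne⟩
          simp only [hx', this, Bool.xor_true]
          revert hne; cases x i <;> cases x0 i <;> simp
      have hE0 : E0 x x' := by
        apply e0_of_eq_of_large (L := (I.sup id) + 1)
        intro n hn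
        have hnI : n ∉ I := by
          intro hnI
          have h' : n ≤ I.sup id := Finset.le_sup (f := id) hnI
          omega
        have : d n = false := by
          simp only [hd, decide_eq_false_iff_not, hmemK]
          tauto
        simp [hx', this]
      have hx'A : x' ∉ A := fun h => hx ((hinv x x' hE0).mpr h)
      exact ⟨hx'C, hx'A⟩
    rw [← compl_compl A]
    have : IsMeagre Aᶜ := by
      refine Filter.mem_of_superset (countable_iInter_mem.2 fun K : Finset ℕ =>
        (hmeag.preimage_of_isOpenMap (flipH (fun i => decide (i ∈ K))).continuous
          (flipH (fun i => decide (i ∈ K))).isOpenMap : IsMeagre _)) ?_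
      rw [← compl_iUnion, compl_subset_compl]
      exact hcover
    exact this

/-- An invariant Borel function to `ℕ` is residually constant. -/
lemma exists_residual_const (f : (ℕ → Bool) → ℕ) (hf : Measurable f)
    (hinv : ∀ x y, E0 x y → f x = f y) :
    ∃ k, {x | f x = k} ∈ residual (ℕ → Bool) := by
  by_contra h
  push_neg at h
  have hm : ∀ k, IsMeagre {x | f x = k} := by
    intro k
    refine (meager_or_comeager ((hf (measurableSet_singleton k)).baireMeasurableSet)
      (fun x y hxy => by simp [hinv x y hxy])).resolve_right (h k)
  have huniv : IsMeagre (univ : Set (ℕ → Bool)) := by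
    have : (univ : Set (ℕ → Bool)) ⊆ ⋃ k, {x | f x = k} := fun x _ => mem_iUnion.2 ⟨f x, rfl⟩
    exact (isMeagre_iUnion hm).mono this
  have hd : Dense ((univ : Set (ℕ → Bool))ᶜ) := dense_of_mem_residual huniv
  simpa using hd.nonempty

lemma phi_ex (x : ℕ → Bool) (n : ℕ) :
    ∃ m, x (n + m) = true ∨ ∀ j, x (n + j) = false := by
  by_cases h : ∃ m, x (n + m) = true
  · obtain ⟨m, hm⟩ := h; exact ⟨m, Or.inl hm⟩
  · push_neg at h
    exact ⟨0, Or.inr fun j => by simpa using h j⟩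

open scoped Classical in
/-- `phi x n` is (essentially) the first position `≥ n` where `x` is `true`. -/
noncomputable def phi (x : ℕ → Bool) (n : ℕ) : ℕ := n + Nat.find (phi_ex x n)

open scoped Classical in
lemma measurable_phi : Measurable phi := by
  rw [measurable_pi_iff]
  intro n
  have : Measurable fun x : ℕ → Bool => Nat.find (phi_ex x n) := by
    apply measurable_find
    intro k
    have heq : {x : ℕ → Bool | x (n + k) = true ∨ ∀ j, x (n + j) = false} =
        ((fun x : ℕ → Bool => x (n + k)) ⁻¹' ({true} : Set Bool)) ∪
          ⋂ j, ((fun x : ℕ → Bool => x (n + j)) ⁻¹' ({false} : Set Bool)) := by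
      ext x
      simp [Set.mem_iInter]
    rw [heq]
    exact (measurableSet_preimage (measurable_pi_apply (n + k))
        (measurableSet_singleton true)).union
      (MeasurableSet.iInter fun j => measurableSet_preimage (measurable_pi_apply (n + j))
        (measurableSet_singleton false))
  exact this.const_add n

open scoped Classical in
lemma phi_spec {x : ℕ → Bool} {n m : ℕ} (hm : x m = true) (hnm : n ≤ m) :
    x (phi x n) = true ∧ n ≤ phi x n := by
  rw [phi]
  have hspec := Nat.find_spec (phi_ex x n)
  rcases hspec with hspec | hspec
  · exact ⟨hspec, Nat.le_add_right n _⟩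
  · exfalso
    have := hspec (m - n)
    rw [Nat.add_sub_cancel' hnm] at this
    simp [hm] at this

/-- The (open, dense) set of `x` taking value `true` somewhere at or after `N`. -/
def Gset (N : ℕ) : Set (ℕ → Bool) := ⋃ m, ⋃ (_ : N ≤ m), {x | x m = true}

/-- The (open, dense) set of `x` which are `false` on the interval `[n, β n]`
for some `n ≥ N`. -/
def Hset (β : ℕ → ℕ) (N : ℕ) : Set (ℕ → Bool) :=
  ⋃ n, ⋃ (_ : N ≤ n), ⋂ j ∈ Finset.Icc n (β n), {x | x j = false}

lemma isOpen_coord (k : ℕ) (b : Bool) : IsOpen {x : ℕ → Bool | x k = b} := by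
  have heq : {x : ℕ → Bool | x k = b} = (fun x : ℕ → Bool => x k) ⁻¹' ({b} : Set Bool) := rfl
  rw [heq]
  exact (continuous_apply k).isOpen_preimage _ (isOpen_discrete _)

lemma isOpen_Gset (N : ℕ) : IsOpen (Gset N) :=
  isOpen_iUnion fun m => isOpen_iUnion fun _ => isOpen_coord m true

lemma isOpen_Hset (β : ℕ → ℕ) (N : ℕ) : IsOpen (Hset β N) :=
  isOpen_iUnion fun n => isOpen_iUnion fun _ =>
    isOpen_biInter_finset fun j _ => isOpen_coord j false

/-- Generic construction of a point in a given open set modified off a finite set. -/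
lemma mem_open_modify {U : Set (ℕ → Bool)} (hU : IsOpen U) {x0 : ℕ → Bool} (hx0 : x0 ∈ U)
    (b : Bool) : ∃ I : Finset ℕ,
      (fun i => if i ∈ I then x0 i else b) ∈ U := by
  obtain ⟨I, u, hu, hpi⟩ := isOpen_pi_iff.1 hU x0 hx0
  refine ⟨I, hpi ?_⟩
  rw [Set.mem_pi]
  intro i hi
  simp only [Finset.mem_coe] at hi
  rw [if_pos hi]
  exact (hu i hi).2

lemma dense_Gset (N : ℕ) : Dense (Gset N) := by
  rw [dense_iff_inter_open]
  rintro U hU ⟨x0, hx0⟩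
  obtain ⟨I, hy⟩ := mem_open_modify hU hx0 true
  set y : ℕ → Bool := fun i => if i ∈ I then x0 i else true with hydef
  refine ⟨y, hy, ?_⟩
  set m : ℕ := max N ((I.sup id) + 1) with hm
  have hmI : m ∉ I := by
    intro hmem
    have h1 : m ≤ I.sup id := Finset.le_sup (f := id) hmem
    have h2 : (I.sup id) + 1 ≤ m := le_max_right _ _
    omega
  simp only [Gset, Set.mem_iUnion, Set.mem_setOf_eq]
  refine ⟨m, le_max_left _ _, ?_⟩
  simp [hydef, hmI]

lemma dense_Hset (β : ℕ → ℕ) (N : ℕ) : Dense (Hset β N) := by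
  rw [dense_iff_inter_open]
  rintro U hU ⟨x0, hx0⟩
  obtain ⟨I, hy⟩ := mem_open_modify hU hx0 false
  set y : ℕ → Bool := fun i => if i ∈ I then x0 i else false with hydef
  refine ⟨y, hy, ?_⟩
  set n : ℕ := max N ((I.sup id) + 1) with hn
  simp only [Hset, Set.mem_iUnion, Set.mem_iInter, Set.mem_setOf_eq]
  refine ⟨n, le_max_left _ _, fun j hj => ?_⟩
  rw [Finset.mem_Icc] at hj
  have hjI : j ∉ I := by
    intro hmem
    have h1 : j ≤ I.sup id := Finset.le_sup (f := id) hmem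
    have h2 : (I.sup id) + 1 ≤ n := le_max_right _ _
    omega
  simp [hydef, hjI]

end E0Aux

open E0Aux Set in
/-- The relation `E₀` of eventual equality on `2^ℕ` is not invariantly Borel
bounded: there is a Borel function `φ : 2^ℕ → ℕ^ℕ` such that no `E₀`-invariant
Borel function `ψ : 2^ℕ → ℕ^ℕ` satisfies `φ(x) ≤* ψ(x)` for all `x`. -/
theorem E0_not_invariantlyBorelBounded :
    ∃ φ : (ℕ → Bool) → ℕ → ℕ, Measurable φ ∧
      ¬ ∃ ψ : (ℕ → Bool) → ℕ → ℕ, Measurable ψ ∧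
          (∀ x y, E0 x y → ψ x = ψ y) ∧ ∀ x, EvLe (φ x) (ψ x) := by
  refine ⟨phi, measurable_phi, ?_⟩
  rintro ⟨ψ, hψm, hψinv, hdom⟩
  -- ψ is residually equal to some fixed β
  have hconst : ∀ n, ∃ k, {x | ψ x n = k} ∈ residual (ℕ → Bool) := by
    intro n
    exact exists_residual_const (fun x => ψ x n)
      ((measurable_pi_apply n).comp hψm)
      (fun x y hxy => congrFun (hψinv x y hxy) n)
  choose β hβ using hconst
  -- find a generic point
  have hres : (⋂ n, {x | ψ x n = β n}) ∩ (⋂ N, Gset N) ∩ (⋂ N, Hset β N) ∈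
      residual (ℕ → Bool) := by
    refine Filter.inter_mem (Filter.inter_mem ?_ ?_) ?_
    · exact countable_iInter_mem.2 hβ
    · exact countable_iInter_mem.2 fun N =>
        residual_of_dense_open (isOpen_Gset N) (dense_Gset N)
    · exact countable_iInter_mem.2 fun N =>
        residual_of_dense_open (isOpen_Hset β N) (dense_Hset β N)
  obtain ⟨x, ⟨hxψ, hxG⟩, hxH⟩ := (dense_of_mem_residual hres).nonempty
  simp only [mem_iInter, mem_setOf_eq] at hxψ hxG hxH
  -- φ x ≤* ψ x = β
  obtain ⟨N, hN⟩ := eventually_atTop.1 (hdom x)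
  -- find n ≥ N with x false on [n, β n]
  obtain ⟨n, hn⟩ := mem_iUnion.1 (hxH N)
  obtain ⟨hNn, hn⟩ := mem_iUnion.1 hn
  have hfalse : ∀ j ∈ Finset.Icc n (β n), x j = false := by
    intro j hj
    exact Set.mem_iInter₂.1 hn j hj
  -- find a true at or after n
  obtain ⟨m, hm⟩ := mem_iUnion.1 (hxG n)
  obtain ⟨hnm, hm⟩ := mem_iUnion.1 hm
  have hm' : x m = true := hm
  obtain ⟨htrue, hle⟩ := phi_spec hm' hnm
  -- contradiction
  have h1 : phi x n ≤ β n := by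
    have := hN n hNn
    rwa [hxψ n] at this
  have h2 : x (phi x n) = false := hfalse _ (Finset.mem_Icc.2 ⟨hle, h1⟩)
  rw [htrue] at h2
  simp at h2
end

section
/- Let E and F be countable Borel equivalence relations on the same standard Borel space X with E ⊆ F, let 𝐀 be an invariant relation, and let Φ be a property of subsets of A₊. Suppose F is smooth over E, i.e. there is a Borel homomorphism f : X → X from F to E such that x E f(x) for all x ∈ X. If E is Borel non-(𝐀,Φ), then F is Borel non-(𝐀,Φ). -/
open Filter

/-- An invariant relation `𝐀 = (A₋, A₊, A)`: `A₋` and `A₊` are Borel subsets of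
`ℕ^ℕ` (with `2^ℕ = 𝒫(ℕ)` regarded as `{0,1}`-valued functions), and the
relation `A` respects eventual equality on both sides. -/
structure InvRelation where
  neg : Set (ℕ → ℕ)
  pos : Set (ℕ → ℕ)
  negBorel : MeasurableSet neg
  posBorel : MeasurableSet pos
  rel : (ℕ → ℕ) → (ℕ → ℕ) → Prop
  invariant : ∀ x x' y y', x ∈ neg → x' ∈ neg → y ∈ pos → y' ∈ pos →
    EvEq x x' → EvEq y y' → (rel x y ↔ rel x' y')

/-- `E` is Borel non-`(𝐀,Φ)`: for every Borel homomorphism `φ : X → (A₊)^ℕ`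
from `E` to `E_set(A₊)` such that each family `{φ(x)(n) : n ∈ ℕ}` has property
`Φ`, there is a Borel homomorphism `ψ : X → A₋` from `E` to `E₀(A₋)` with
`¬(ψ(x) A φ(x)(n))` for all `x` and `n`. -/
def BorelNonRel (A : InvRelation) (Φ : Set (ℕ → ℕ) → Prop)
    {X : Type*} [MeasurableSpace X] (E : X → X → Prop) : Prop :=
  ∀ φ : X → ℕ → ℕ → ℕ, Measurable φ → (∀ x n, φ x n ∈ A.pos) →
    (∀ x y, E x y → Set.range (φ x) = Set.range (φ y)) →
    (∀ x, Φ (Set.range (φ x))) →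
    ∃ ψ : X → ℕ → ℕ, Measurable ψ ∧ (∀ x, ψ x ∈ A.neg) ∧
      (∀ x y, E x y → EvEq (ψ x) (ψ y)) ∧ ∀ x n, ¬ A.rel (ψ x) (φ x n)

/-- Suppose `E ⊆ F` are countable Borel equivalence relations on the same
standard Borel space and `F` is smooth over `E`, i.e. there is a Borel
homomorphism `f` from `F` to `E` with `x E f(x)` for all `x`. If `E` is Borel
non-`(𝐀,Φ)`, then so is `F`. -/
theorem borelNonRel_of_smoothOver
    {X : Type*} [MeasurableSpace X] [StandardBorelSpace X]
    (A : InvRelation) (Φ : Set (ℕ → ℕ) → Prop)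
    (E F : X → X → Prop)
    (hEeq : Equivalence E) (hEBorel : MeasurableSet {p : X × X | E p.1 p.2})
    (hECtble : ∀ x, {y | E x y}.Countable)
    (hFeq : Equivalence F) (hFBorel : MeasurableSet {p : X × X | F p.1 p.2})
    (hFCtble : ∀ x, {y | F x y}.Countable)
    (hsub : ∀ x y, E x y → F x y)
    (f : X → X) (hf : Measurable f)
    (hhom : ∀ x y, F x y → E (f x) (f y))
    (hfix : ∀ x, E x (f x))
    (hE : BorelNonRel A Φ E) :
    BorelNonRel A Φ F := by
  intro φ hφ hpos hhomφ hΦ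
  have hFxfx : ∀ x, F x (f x) := fun x => hsub _ _ (hfix x)
  obtain ⟨ψ, hψm, hψneg, hψhom, hψrel⟩ :=
    hE (fun x => φ (f x)) (hφ.comp hf) (fun x n => hpos (f x) n)
      (fun x y hxy => hhomφ _ _ (hsub _ _ (hhom _ _ (hsub _ _ hxy))))
      (fun x => by rw [← hhomφ _ _ (hFxfx x)]; exact hΦ x)
  refine ⟨fun x => ψ (f x), hψm.comp hf, fun x => hψneg (f x),
    fun x y hxy => hψhom _ _ (hhom _ _ hxy), fun x n => ?_⟩
  have : φ x n ∈ Set.range (φ (f x)) := by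
    rw [← hhomφ _ _ (hFxfx x)]; exact ⟨n, rfl⟩
  obtain ⟨m, hm⟩ := this
  have hev : EvEq (ψ (f x)) (ψ x) := hψhom _ _ (hEeq.symm (hfix x))
  rw [A.invariant _ _ _ _ (hψneg (f x)) (hψneg x) (hpos x n) (hpos (f x) m)
    hev (hm ▸ Filter.Eventually.of_forall fun _ => rfl)]
  exact hψrel x m
end

section
/- If a countable Borel equivalence relation E on a standard Borel space X has property 𝖻, then E has property 𝗋 (Borel reapable). -/
open Filter

/-- Eventual equality on `2^ℕ` (i.e. finite symmetric difference, `=*`). -/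
def EvEqB (x y : ℕ → Bool) : Prop := ∀ᶠ n in Filter.atTop, x n = y n

/-- `x` is an infinite subset of `ℕ` (i.e. `x ∈ [ℕ]^ℕ`). -/
def IsInfSet (x : ℕ → Bool) : Prop := {n | x n = true}.Infinite

/-- Almost containment `x ⊆* y`: `x \ y` is finite. -/
def AlmostSubset (x y : ℕ → Bool) : Prop := {n | x n = true ∧ y n = false}.Finite

/-- The complement `ℕ \ x` of a subset of `ℕ`. -/
def complB (x : ℕ → Bool) : ℕ → Bool := fun n => !(x n)

/-- `E` has property `𝖻`. -/
def PropertyB {X : Type*} [MeasurableSpace X] (E : X → X → Prop) : Prop :=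
  ∀ φ : X → ℕ → ℕ → ℕ, Measurable φ →
    (∀ x y, E x y → Set.range (φ x) = Set.range (φ y)) →
    ∃ ψ : X → ℕ → ℕ, Measurable ψ ∧ (∀ x y, E x y → EvEq (ψ x) (ψ y)) ∧
      ∀ x n, EvLe (φ x n) (ψ x)

/-- `E` has property `𝗋` (Borel reapable): for every Borel homomorphism
`φ : X → ([ℕ]^ℕ)^ℕ` from `E` to `E_set`, there is a Borel homomorphism
`ψ : X → [ℕ]^ℕ` from `E` to `=*` such that `ψ(x)` splits each `φ(x)(n)`. -/
def PropertyR {X : Type*} [MeasurableSpace X] (E : X → X → Prop) : Prop :=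
  ∀ φ : X → ℕ → ℕ → Bool, Measurable φ → (∀ x n, IsInfSet (φ x n)) →
    (∀ x y, E x y → Set.range (φ x) = Set.range (φ y)) →
    ∃ ψ : X → ℕ → Bool, Measurable ψ ∧ (∀ x, IsInfSet (ψ x)) ∧
      (∀ x y, E x y → EvEqB (ψ x) (ψ y)) ∧
      ∀ x n, {k | ψ x k = true ∧ φ x n k = true}.Infinite ∧
        {k | ψ x k = false ∧ φ x n k = true}.Infinite


namespace PropRAux


variable {X : Type*} [MeasurableSpace X]

/-- next element of the set `A` above `k` -/
noncomputable def nxtFn (A : ℕ → Bool) (k : ℕ) : ℕ := sInf {a | k < a ∧ A a = true}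

/-- strictly increasing majorization -/
def monoUp (b : ℕ → ℕ) (k : ℕ) : ℕ := (Finset.range (k + 1)).sup b + k + 1

/-- override `g` by the finite list `l` -/
def ovr (g : ℕ → ℕ) (l : List ℕ) (k : ℕ) : ℕ := l.getD k (g k)

def itFn (g : ℕ → ℕ) (l : List ℕ) (j : ℕ) : ℕ := (ovr g l)^[3 * j] 0

def blockSet (u g : ℕ → ℕ) (k : ℕ) : Bool :=
  (List.range (k + 1)).any fun j => decide (u j ≤ k ∧ k < u (j + 1) ∧ k ≤ g (u j))

lemma measurable_applyNat {h : X → ℕ → ℕ} {f : X → ℕ}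
    (hh : ∀ k, Measurable fun x => h x k) (hf : Measurable f) :
    Measurable fun x => h x (f x) := by
  apply measurable_to_countable'
  intro a
  have : (fun x => h x (f x)) ⁻¹' {a} = ⋃ k, (f ⁻¹' {k}) ∩ ((fun x => h x k) ⁻¹' {a}) := by
    ext x
    simp only [Set.mem_preimage, Set.mem_singleton_iff, Set.mem_iUnion, Set.mem_inter_iff]
    constructor
    · intro hx; exact ⟨f x, rfl, hx⟩
    · rintro ⟨k, hk, hx⟩; rw [hk]; exact hx
  rw [this]
  exact MeasurableSet.iUnion fun k => (hf .of_discrete).inter ((hh k) .of_discrete)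

lemma measurable_nat2 {f g : X → ℕ} (hf : Measurable f) (hg : Measurable g) (F : ℕ → ℕ → ℕ) :
    Measurable fun x => F (f x) (g x) :=
  measurable_applyNat (h := fun x k => F (f x) k)
    (fun k => (Measurable.of_discrete (f := fun v => F v k)).comp hf) hg

lemma measurable_sInf {p : X → ℕ → Prop} (hp : ∀ x, ∃ n, p x n)
    (hm : ∀ n, MeasurableSet {x | p x n}) :
    Measurable fun x => sInf {n | p x n} := by
  apply measurable_to_countable'
  intro a
  have : (fun x => sInf {n | p x n}) ⁻¹' {a}
      = {x | p x a} ∩ ⋂ b ∈ Set.Iio a, {x | p x b}ᶜ := by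
    ext x
    simp only [Set.mem_preimage, Set.mem_singleton_iff, Set.mem_inter_iff, Set.mem_setOf_eq,
      Set.mem_iInter, Set.mem_compl_iff, Set.mem_Iio]
    constructor
    · rintro rfl
      exact ⟨Nat.sInf_mem (hp x), fun b hb => Nat.notMem_of_lt_sInf hb⟩
    · rintro ⟨ha, hb⟩
      refine le_antisymm (Nat.sInf_le ha) (le_of_not_gt fun h => hb _ h ?_)
      exact Nat.sInf_mem (hp x)
  rw [this]
  exact (hm a).inter (MeasurableSet.biInter (Set.to_countable _) fun b _ => (hm b).compl)

lemma measurable_finsetSup {b : X → ℕ → ℕ} (hb : ∀ k, Measurable fun x => b x k) (m : ℕ) :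
    Measurable fun x => (Finset.range m).sup (b x) := by
  induction m with
  | zero =>
    have : (fun x => (Finset.range 0).sup (b x)) = fun _ => 0 := by funext x; simp
    rw [this]; exact measurable_const
  | succ m ih =>
    have : (fun x => (Finset.range (m + 1)).sup (b x))
        = fun x => max (b x m) ((Finset.range m).sup (b x)) := by
      funext x; rw [Finset.range_add_one, Finset.sup_insert]
    rw [this]
    exact measurable_nat2 (hb m) ih max

lemma measurable_iter {h : X → ℕ → ℕ} (hh : ∀ k, Measurable fun x => h x k) (t : ℕ) :
    Measurable fun x => (h x)^[t] 0 := by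
  induction t with
  | zero => simpa using measurable_const
  | succ t ih =>
    have : (fun x => (h x)^[t + 1] 0) = fun x => h x ((h x)^[t] 0) := by
      funext x; rw [Function.iterate_succ_apply']
    rw [this]; exact measurable_applyNat hh ih

lemma monoUp_strictMono (b : ℕ → ℕ) : StrictMono (monoUp b) := by
  apply strictMono_nat_of_lt_succ
  intro k
  have h : (Finset.range (k + 1)).sup b ≤ (Finset.range (k + 1 + 1)).sup b :=
    Finset.sup_mono (Finset.range_subset_range.mpr (by omega))
  unfold monoUp
  omega

lemma lt_monoUp (b : ℕ → ℕ) (k : ℕ) : k < monoUp b k := by unfold monoUp; omega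

lemma le_monoUp (b : ℕ → ℕ) (k : ℕ) : b k ≤ monoUp b k := by
  have : b k ≤ (Finset.range (k + 1)).sup b :=
    Finset.le_sup (Finset.mem_range.mpr (by omega))
  unfold monoUp
  omega

lemma monoUp_eventual {b b' : ℕ → ℕ} {N : ℕ} (hbb : ∀ k, N ≤ k → b k = b' k)
    (hub : ∀ m, ∃ k, N ≤ k ∧ m ≤ b k) :
    ∃ K, ∀ k, K ≤ k → monoUp b k = monoUp b' k := by
  set M := (Finset.range N).sup fun j => max (b j) (b' j) with hM
  obtain ⟨k₀, hk₀N, hk₀⟩ := hub M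
  refine ⟨k₀, fun k hk => ?_⟩
  have hsup : (Finset.range (k + 1)).sup b = (Finset.range (k + 1)).sup b' := by
    have hMb : ∀ j, j < N → b j ≤ M := fun j hj =>
      le_trans (le_max_left _ _) (Finset.le_sup (f := fun j => max (b j) (b' j))
        (Finset.mem_range.mpr hj))
    have hMb' : ∀ j, j < N → b' j ≤ M := fun j hj =>
      le_trans (le_max_right _ _) (Finset.le_sup (f := fun j => max (b j) (b' j))
        (Finset.mem_range.mpr hj))
    have hk₀mem : k₀ ∈ Finset.range (k + 1) := Finset.mem_range.mpr (by omega)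
    apply le_antisymm
    · apply Finset.sup_le
      intro j hj
      rcases le_or_gt N j with h | h
      · rw [hbb j h]; exact Finset.le_sup hj
      · calc b j ≤ M := hMb j h
          _ ≤ b k₀ := hk₀
          _ = b' k₀ := hbb _ hk₀N
          _ ≤ _ := Finset.le_sup hk₀mem
    · apply Finset.sup_le
      intro j hj
      rcases le_or_gt N j with h | h
      · rw [← hbb j h]; exact Finset.le_sup hj
      · calc b' j ≤ M := hMb' j h
          _ ≤ b k₀ := hk₀
          _ ≤ _ := Finset.le_sup hk₀mem
  unfold monoUp
  rw [hsup]

lemma le_iterate {g : ℕ → ℕ} (hgt : ∀ k, k < g k) (s v : ℕ) : v ≤ g^[s] v := by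
  induction s with
  | zero => simp
  | succ s ih =>
    rw [Function.iterate_succ_apply']
    exact le_trans ih (le_of_lt (hgt _))

lemma add_le_iterate {g : ℕ → ℕ} (hgt : ∀ k, k < g k) (s v : ℕ) : v + s ≤ g^[s] v := by
  induction s with
  | zero => simp
  | succ s ih =>
    rw [Function.iterate_succ_apply']
    have := hgt (g^[s] v)
    omega

lemma iterate_exp_mono {g : ℕ → ℕ} (hgt : ∀ k, k < g k) {a b : ℕ} (h : a ≤ b) (v : ℕ) :
    g^[a] v ≤ g^[b] v := by
  have hb : b = (b - a) + a := by omega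
  rw [hb, Function.iterate_add_apply]
  exact le_iterate hgt _ _

lemma iterate_succ_arg {g : ℕ → ℕ} (hgs : StrictMono g) (s v : ℕ) :
    g^[s] v + 1 ≤ g^[s] (v + 1) :=
  Nat.succ_le_of_lt ((hgs.iterate s) (Nat.lt_succ_self v))

lemma iterate_three {g : ℕ → ℕ} (v : ℕ) : g^[3] v = g (g (g v)) := by
  rfl

lemma ovr_single_iterate {g : ℕ → ℕ} (hgt : ∀ k, k < g k) {R : ℕ} (hR : 1 ≤ R) {s : ℕ}
    (hs : 1 ≤ s) : (ovr g [R])^[s] 0 = g^[s - 1] R := by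
  have h0 : ovr g [R] 0 = R := rfl
  have hv : ∀ v, 1 ≤ v → ovr g [R] v = g v := by
    intro v hv
    unfold ovr
    exact List.getD_eq_default _ _ (by simpa using hv)
  have key : ∀ t, (ovr g [R])^[t] R = g^[t] R := by
    intro t
    induction t with
    | zero => rfl
    | succ t ih =>
      rw [Function.iterate_succ_apply', Function.iterate_succ_apply', ih, hv]
      have := le_iterate hgt t R
      omega
  obtain ⟨s', rfl⟩ : ∃ s', s = s' + 1 := ⟨s - 1, by omega⟩
  rw [Function.iterate_succ_apply, h0, key]
  simp

lemma nat_le_of_strictMono {u : ℕ → ℕ} (hu : StrictMono u) (n : ℕ) : n ≤ u n := by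
  induction n with
  | zero => exact Nat.zero_le _
  | succ n ih => exact Nat.succ_le_of_lt (lt_of_le_of_lt ih (hu (Nat.lt_succ_self n)))

lemma exists_block {u : ℕ → ℕ} (hu : StrictMono u) {k : ℕ} (hk : u 0 ≤ k) :
    ∃ j, u j ≤ k ∧ k < u (j + 1) := by
  classical
  have hn : ∃ j, k < u j :=
    ⟨k + 1, lt_of_lt_of_le (Nat.lt_succ_self k) (nat_le_of_strictMono hu (k + 1))⟩
  have hspec : k < u (Nat.find hn) := Nat.find_spec hn
  have hpos : Nat.find hn ≠ 0 := by
    intro h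
    rw [h] at hspec
    omega
  refine ⟨Nat.find hn - 1, ?_, ?_⟩
  · have := Nat.find_min hn (m := Nat.find hn - 1) (by omega)
    omega
  · have h1 : Nat.find hn - 1 + 1 = Nat.find hn := by omega
    rw [h1]; exact hspec

lemma block_unique {u : ℕ → ℕ} (hu : StrictMono u) {k j j' : ℕ}
    (h1 : u j ≤ k) (h2 : k < u (j + 1)) (h1' : u j' ≤ k) (h2' : k < u (j' + 1)) : j = j' := by
  by_contra hne
  rcases Nat.lt_or_ge j j' with hl | hl
  · have : u (j + 1) ≤ u j' := hu.monotone (by omega)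
    omega
  · have hl' : j' < j := by omega
    have : u (j' + 1) ≤ u j := hu.monotone (by omega)
    omega

lemma blockSet_true {u g : ℕ → ℕ} (hu : ∀ j, j < u j) (k : ℕ) :
    blockSet u g k = true ↔ ∃ j, u j ≤ k ∧ k < u (j + 1) ∧ k ≤ g (u j) := by
  simp only [blockSet, List.any_eq_true, List.mem_range, decide_eq_true_eq]
  constructor
  · rintro ⟨j, _, h⟩; exact ⟨j, h⟩
  · rintro ⟨j, h⟩
    exact ⟨j, Nat.lt_succ_of_lt (lt_of_lt_of_le (hu j) h.1), h⟩

lemma blockSet_eq_decide {u g : ℕ → ℕ} (hus : StrictMono u) (hu : ∀ j, j < u j) {k j : ℕ}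
    (h1 : u j ≤ k) (h2 : k < u (j + 1)) :
    blockSet u g k = decide (k ≤ g (u j)) := by
  rcases le_or_gt k (g (u j)) with hle | hlt
  · rw [(blockSet_true hu k).mpr ⟨j, h1, h2, hle⟩, decide_eq_true hle]
  · have hf : blockSet u g k ≠ true := by
      intro hmem
      obtain ⟨j', hj1, hj2, hj3⟩ := (blockSet_true hu k).mp hmem
      have hjj : j' = j := block_unique hus hj1 hj2 h1 h2
      rw [hjj] at hj3
      omega
    rw [Bool.eq_false_iff.mpr hf, decide_eq_false (not_le.mpr hlt)]

lemma exists_good {g u : ℕ → ℕ} (hgs : StrictMono g) (hgt : ∀ k, k < g k)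
    (hdom : ∀ R, 1 ≤ R → ∃ T, ∀ j, T ≤ j → g^[3 * j - 1] R ≤ u j) (J₀ : ℕ) :
    ∃ j, J₀ ≤ j ∧ g (g (g (u j))) ≤ u (j + 1) := by
  by_contra hbad
  push_neg at hbad
  set J := max J₀ 1 with hJdef
  have hJ1 : 1 ≤ J := le_max_right _ _
  have hJ0 : J₀ ≤ J := le_max_left _ _
  have hstep : ∀ t, 1 ≤ t → u (J + t) < g^[3 * t] (u J) := by
    intro t
    induction t with
    | zero => intro h; omega
    | succ t ih =>
      intro _
      rcases Nat.eq_zero_or_pos t with rfl | ht'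
      · have h := hbad J hJ0
        have h3 : g^[3 * 1] (u J) = g (g (g (u J))) := by
          rw [show 3 * 1 = 3 by norm_num, iterate_three]
        show u (J + 1) < g^[3 * 1] (u J)
        omega
      · have ihh := ih ht'
        have hb := hbad (J + t) (by omega)
        have hmono : g (g (g (u (J + t)))) ≤ g (g (g (g^[3 * t] (u J)))) :=
          hgs.monotone (hgs.monotone (hgs.monotone (le_of_lt ihh)))
        have heq : g (g (g (g^[3 * t] (u J)))) = g^[3 * (t + 1)] (u J) := by
          rw [← iterate_three (g := g), ← Function.iterate_add_apply,
            show 3 + 3 * t = 3 * (t + 1) by ring]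
        have hres : u (J + t + 1) < g^[3 * (t + 1)] (u J) := by omega
        exact hres
  obtain ⟨T, hT⟩ := hdom (g^[3 * J] (u J) + 1) (by omega)
  set j := T + J + 1 with hjdef
  set t := j - J with htdef
  have hjt : j = J + t := by omega
  have ht1 : 1 ≤ t := by omega
  have h1 : u j < g^[3 * t] (u J) := by rw [hjt]; exact hstep t ht1
  have h2 : g^[3 * j - 1] (g^[3 * J] (u J) + 1) ≤ u j := hT j (by omega)
  have h3 : g^[3 * j - 1] (g^[3 * J] (u J)) + 1 ≤ g^[3 * j - 1] (g^[3 * J] (u J) + 1) :=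
    iterate_succ_arg hgs _ _
  have h4 : g^[3 * j - 1] (g^[3 * J] (u J)) = g^[3 * j - 1 + 3 * J] (u J) :=
    (Function.iterate_add_apply g _ _ _).symm
  have h5 : g^[3 * t] (u J) ≤ g^[3 * j - 1 + 3 * J] (u J) :=
    iterate_exp_mono hgt (by omega) _
  omega


lemma itFn_range_subset {g g' : ℕ → ℕ} {N : ℕ} (h : ∀ k, N ≤ k → g k = g' k) :
    Set.range (fun i => itFn g (Denumerable.ofNat (List ℕ) i)) ⊆
      Set.range (fun i => itFn g' (Denumerable.ofNat (List ℕ) i)) := by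
  rintro _ ⟨i, rfl⟩
  set l := Denumerable.ofNat (List ℕ) i with hl
  set L := max l.length N with hL
  set l' := (List.range L).map (ovr g l) with hl'
  refine ⟨Encodable.encode l', ?_⟩
  show itFn g' (Denumerable.ofNat (List ℕ) (Encodable.encode l')) = itFn g l
  rw [Denumerable.ofNat_encode]
  have hov : ovr g' l' = ovr g l := by
    funext k
    rcases lt_or_ge k L with hk | hk
    · have hk' : k < l'.length := by simpa [hl'] using hk
      show l'.getD k (g' k) = ovr g l k
      rw [List.getD_eq_getElem _ _ hk']
      simp [hl']
    · have hk1 : l'.length ≤ k := by simpa [hl'] using hk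
      have hk2 : l.length ≤ k := le_trans (le_max_left _ _) hk
      show l'.getD k (g' k) = l.getD k (g k)
      rw [List.getD_eq_default _ _ hk1, List.getD_eq_default _ _ hk2]
      exact (h k (le_trans (le_max_right _ _) hk)).symm
  unfold itFn
  rw [hov]


end PropRAux

open PropRAux in
/-- If a countable Borel equivalence relation on a standard Borel space has
property `𝖻`, then it has property `𝗋`. -/
theorem propertyR_of_propertyB
    {X : Type*} [MeasurableSpace X] [StandardBorelSpace X]
    (E : X → X → Prop) (hEq : Equivalence E)
    (hBorel : MeasurableSet {p : X × X | E p.1 p.2})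
    (hCtble : ∀ x, {y | E x y}.Countable)
    (hB : PropertyB E) : PropertyR E := by
  intro φ hφ hInf hhom
  classical
  have hφe : ∀ n k, Measurable fun x => φ x n k := fun n k =>
    (measurable_pi_apply k).comp ((measurable_pi_apply n).comp hφ)
  have mφ : ∀ n a, MeasurableSet {x | φ x n a = true} := fun n a =>
    (hφe n a) (MeasurableSet.of_discrete (s := {true}))
  -- Step 1: next-element functions
  set Φ₁ : X → ℕ → ℕ → ℕ := fun x n => nxtFn (φ x n) with hΦ₁def
  have hne : ∀ x n k, ∃ a, k < a ∧ φ x n a = true := by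
    intro x n k
    obtain ⟨m, hm, hk⟩ := (hInf x n).exists_gt k
    exact ⟨m, hk, hm⟩
  have hnxt_mem : ∀ x n k, k < Φ₁ x n k ∧ φ x n (Φ₁ x n k) = true := fun x n k =>
    Nat.sInf_mem (hne x n k)
  have hΦ₁m : Measurable Φ₁ := by
    apply measurable_pi_lambda; intro n
    apply measurable_pi_lambda; intro k
    apply measurable_sInf (p := fun x a => k < a ∧ φ x n a = true) (fun x => hne x n k)
    intro a
    by_cases hka : k < a
    · have h : {x : X | k < a ∧ φ x n a = true} = {x | φ x n a = true} := by
        ext x; simp [hka]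
      rw [h]; exact mφ n a
    · have h : {x : X | k < a ∧ φ x n a = true} = ∅ := by
        ext x; simp [hka]
      rw [h]; exact MeasurableSet.empty
  have hΦ₁hom : ∀ x y, E x y → Set.range (Φ₁ x) = Set.range (Φ₁ y) := by
    intro x y hxy
    show Set.range (fun n => nxtFn (φ x n)) = Set.range (fun n => nxtFn (φ y n))
    have hx : Set.range (nxtFn ∘ (φ x)) = nxtFn '' Set.range (φ x) := Set.range_comp _ _
    have hy : Set.range (nxtFn ∘ (φ y)) = nxtFn '' Set.range (φ y) := Set.range_comp _ _
    show Set.range (nxtFn ∘ (φ x)) = Set.range (nxtFn ∘ (φ y))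
    rw [hx, hy, hhom x y hxy]
  obtain ⟨β, hβm, hβhom, hβdom⟩ := hB Φ₁ hΦ₁m hΦ₁hom
  have hβe : ∀ k, Measurable fun x => β x k := fun k => (measurable_pi_apply k).comp hβm
  -- Step 2: monotonization γ
  set γ : X → ℕ → ℕ := fun x => monoUp (β x) with hγdef
  have hγs : ∀ x, StrictMono (γ x) := fun x => monoUp_strictMono (β x)
  have hγt : ∀ x k, k < γ x k := fun x k => lt_monoUp (β x) k
  have hβγ : ∀ x k, β x k ≤ γ x k := fun x k => le_monoUp (β x) k
  have hγe : ∀ k, Measurable fun x => γ x k := by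
    intro k
    exact (Measurable.of_discrete (f := fun v => v + k + 1)).comp
      (measurable_finsetSup hβe (k + 1))
  have hβub : ∀ x (N m : ℕ), ∃ k, N ≤ k ∧ m ≤ β x k := by
    intro x N m
    obtain ⟨N₂, hN₂⟩ := eventually_atTop.mp (hβdom x 0)
    refine ⟨max (max N N₂) m, le_trans (le_max_left _ _) (le_max_left _ _), ?_⟩
    have h1 : Φ₁ x 0 (max (max N N₂) m) ≤ β x (max (max N N₂) m) :=
      hN₂ _ (le_trans (le_max_right _ _) (le_max_left _ _))
    have h2 := (hnxt_mem x 0 (max (max N N₂) m)).1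
    have h3 : m ≤ max (max N N₂) m := le_max_right _ _
    omega
  have hγhom : ∀ x y, E x y → ∃ N, ∀ k, N ≤ k → γ x k = γ y k := by
    intro x y hxy
    obtain ⟨N, hN⟩ := eventually_atTop.mp (hβhom x y hxy)
    exact monoUp_eventual (fun k hk => hN k hk) (hβub x N)
  -- Step 3: iterate functions
  set Φ₂ : X → ℕ → ℕ → ℕ := fun x i => itFn (γ x) (Denumerable.ofNat (List ℕ) i) with hΦ₂def
  have hΦ₂m : Measurable Φ₂ := by
    apply measurable_pi_lambda; intro i
    apply measurable_pi_lambda; intro j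
    have hco : ∀ k, Measurable fun x => ovr (γ x) (Denumerable.ofNat (List ℕ) i) k := by
      intro k
      exact (Measurable.of_discrete
        (f := fun v => (Denumerable.ofNat (List ℕ) i).getD k v)).comp (hγe k)
    exact measurable_iter hco (3 * j)
  have hΦ₂hom : ∀ x y, E x y → Set.range (Φ₂ x) = Set.range (Φ₂ y) := by
    intro x y hxy
    obtain ⟨N, hN⟩ := hγhom x y hxy
    exact le_antisymm (itFn_range_subset hN) (itFn_range_subset fun k hk => (hN k hk).symm)
  obtain ⟨c, hcm, hchom, hcdom⟩ := hB Φ₂ hΦ₂m hΦ₂hom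
  have hce : ∀ k, Measurable fun x => c x k := fun k => (measurable_pi_apply k).comp hcm
  set U : X → ℕ → ℕ := fun x => monoUp (c x) with hUdef
  have hUs : ∀ x, StrictMono (U x) := fun x => monoUp_strictMono (c x)
  have hUt : ∀ x j, j < U x j := fun x j => lt_monoUp (c x) j
  have hcU : ∀ x j, c x j ≤ U x j := fun x j => le_monoUp (c x) j
  have hUe : ∀ j, Measurable fun x => U x j := by
    intro j
    exact (Measurable.of_discrete (f := fun v => v + j + 1)).comp
      (measurable_finsetSup hce (j + 1))
  have hit : ∀ x (R : ℕ), 1 ≤ R → ∀ j, 1 ≤ j →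
      Φ₂ x (Encodable.encode [R]) j = (γ x)^[3 * j - 1] R := by
    intro x R hR j hj
    show itFn (γ x) (Denumerable.ofNat (List ℕ) (Encodable.encode [R])) j = _
    rw [Denumerable.ofNat_encode]
    exact ovr_single_iterate (hγt x) hR (by omega)
  have hUdom2 : ∀ x, ∀ R, 1 ≤ R → ∃ T, ∀ j, T ≤ j → (γ x)^[3 * j - 1] R ≤ U x j := by
    intro x R hR
    obtain ⟨T, hT⟩ := eventually_atTop.mp (hcdom x (Encodable.encode [R]))
    refine ⟨max T 1, fun j hj => ?_⟩
    have h1 : Φ₂ x (Encodable.encode [R]) j ≤ c x j := hT j (le_trans (le_max_left _ _) hj)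
    rw [hit x R hR j (le_trans (le_max_right _ _) hj)] at h1
    exact le_trans h1 (hcU x j)
  have hcub : ∀ x (N m : ℕ), ∃ k, N ≤ k ∧ m ≤ c x k := by
    intro x N m
    obtain ⟨T, hT⟩ := eventually_atTop.mp (hcdom x (Encodable.encode [1]))
    refine ⟨max (max T N) (max m 1), le_trans (le_max_right _ _) (le_max_left _ _), ?_⟩
    have h1 : Φ₂ x (Encodable.encode [1]) (max (max T N) (max m 1)) ≤ c x (max (max T N) (max m 1)) :=
      hT _ (le_trans (le_max_left _ _) (le_max_left _ _))
    have hk1 : 1 ≤ max (max T N) (max m 1) := le_trans (le_max_right _ _) (le_max_right _ _)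
    rw [hit x 1 (le_refl 1) _ hk1] at h1
    have h2 : 1 + (3 * max (max T N) (max m 1) - 1) ≤ (γ x)^[3 * max (max T N) (max m 1) - 1] 1 :=
      add_le_iterate (hγt x) _ _
    have hmk : m ≤ max (max T N) (max m 1) := le_trans (le_max_left _ _) (le_max_right _ _)
    omega
  have hUhom : ∀ x y, E x y → ∃ N, ∀ j, N ≤ j → U x j = U y j := by
    intro x y hxy
    obtain ⟨N, hN⟩ := eventually_atTop.mp (hchom x y hxy)
    exact monoUp_eventual (fun k hk => hN k hk) (fun m => hcub x N m)
  -- the reaping set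
  refine ⟨fun x => blockSet (U x) (γ x), ?_, ?_, ?_, ?_⟩
  · -- measurable
    apply measurable_pi_lambda; intro k
    have htrue : MeasurableSet {x | blockSet (U x) (γ x) k = true} := by
      have key : {x | blockSet (U x) (γ x) k = true}
          = ⋃ j ∈ Set.Iio (k + 1),
              ({x | U x j ≤ k} ∩ {x | k < U x (j + 1)} ∩ {x | k ≤ γ x (U x j)}) := by
        ext x
        simp only [Set.mem_setOf_eq, Set.mem_iUnion, Set.mem_inter_iff, Set.mem_Iio,
          blockSet, List.any_eq_true, List.mem_range, decide_eq_true_eq]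
        constructor
        · rintro ⟨j, hj, h1, h2, h3⟩; exact ⟨j, hj, ⟨h1, h2⟩, h3⟩
        · rintro ⟨j, hj, ⟨h1, h2⟩, h3⟩; exact ⟨j, hj, h1, h2, h3⟩
      rw [key]
      apply MeasurableSet.biUnion (Set.to_countable _)
      intro j _
      refine MeasurableSet.inter (MeasurableSet.inter ?_ ?_) ?_
      · exact (hUe j) (MeasurableSet.of_discrete (s := {v | v ≤ k}))
      · exact (hUe (j + 1)) (MeasurableSet.of_discrete (s := {v | k < v}))
      · exact (measurable_applyNat hγe (hUe j)) (MeasurableSet.of_discrete (s := {v | k ≤ v}))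
    apply measurable_to_countable'
    intro b
    rcases b with _ | _
    · have h : (fun x => blockSet (U x) (γ x) k) ⁻¹' {false}
          = {x | blockSet (U x) (γ x) k = true}ᶜ := by
        ext x
        simp
      rw [h]; exact htrue.compl
    · exact htrue
  · -- infinite
    intro x
    apply Set.infinite_of_forall_exists_gt
    intro m
    refine ⟨U x (m + 1), ?_, ?_⟩
    · show blockSet (U x) (γ x) (U x (m + 1)) = true
      rw [blockSet_true (hUt x)]
      exact ⟨m + 1, le_refl _, (hUs x) (Nat.lt_succ_self _), le_of_lt (hγt x _)⟩
    · have := hUt x (m + 1); omega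
  · -- homomorphism
    intro x y hxy
    obtain ⟨N₁, hN₁⟩ := hγhom x y hxy
    obtain ⟨N₂, hN₂⟩ := hUhom x y hxy
    show ∀ᶠ k in atTop, blockSet (U x) (γ x) k = blockSet (U y) (γ y) k
    rw [eventually_atTop]
    refine ⟨U x (max N₁ N₂), fun k hk => ?_⟩
    have h0 : U x 0 ≤ k := le_trans ((hUs x).monotone (Nat.zero_le _)) hk
    obtain ⟨j, hj1, hj2⟩ := exists_block (hUs x) h0
    have hjN : max N₁ N₂ ≤ j := by
      by_contra hcon
      push_neg at hcon
      have : U x (j + 1) ≤ U x (max N₁ N₂) := (hUs x).monotone (by omega)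
      omega
    have e1 : U y j = U x j := (hN₂ j (le_trans (le_max_right _ _) hjN)).symm
    have e2 : U y (j + 1) = U x (j + 1) := (hN₂ (j + 1) (by
      have := le_trans (le_max_right _ _) hjN; omega)).symm
    have e3 : γ y (U y j) = γ x (U x j) := by
      rw [e1]
      refine (hN₁ (U x j) ?_).symm
      have h4 := hUt x j
      have h5 : N₁ ≤ max N₁ N₂ := le_max_left _ _
      omega
    rw [blockSet_eq_decide (hUs x) (hUt x) hj1 hj2,
      blockSet_eq_decide (hUs y) (hUt y) (e1 ▸ hj1) (e2 ▸ hj2), e3]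
  · -- splitting
    intro x n
    obtain ⟨N₁, hN₁⟩ := eventually_atTop.mp (hβdom x n)
    have hnx : ∀ k, N₁ ≤ k → k < Φ₁ x n k ∧ φ x n (Φ₁ x n k) = true ∧ Φ₁ x n k ≤ γ x k := by
      intro k hk
      exact ⟨(hnxt_mem x n k).1, (hnxt_mem x n k).2, le_trans (hN₁ k hk) (hβγ x k)⟩
    constructor
    · apply Set.infinite_of_forall_exists_gt
      intro m
      obtain ⟨j, hjm, hgood⟩ := exists_good (hγs x) (hγt x) (hUdom2 x) (max (m + 1) N₁)
      have h4 := hUt x j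
      have hvN : N₁ ≤ U x j := by
        have h5 : N₁ ≤ max (m + 1) N₁ := le_max_right _ _
        omega
      obtain ⟨ha1, ha2, ha3⟩ := hnx (U x j) hvN
      have c1 := hγt x (γ x (U x j))
      have c2 := hγt x (γ x (γ x (U x j)))
      refine ⟨Φ₁ x n (U x j), ⟨?_, ha2⟩, ?_⟩
      · show blockSet (U x) (γ x) (Φ₁ x n (U x j)) = true
        rw [blockSet_true (hUt x)]
        exact ⟨j, le_of_lt ha1, by omega, ha3⟩
      · have h5 : m + 1 ≤ max (m + 1) N₁ := le_max_left _ _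
        omega
    · apply Set.infinite_of_forall_exists_gt
      intro m
      obtain ⟨j, hjm, hgood⟩ := exists_good (hγs x) (hγt x) (hUdom2 x) (max (m + 1) N₁)
      have h4 := hUt x j
      have hvN : N₁ ≤ U x j := by
        have h5 : N₁ ≤ max (m + 1) N₁ := le_max_right _ _
        omega
      have hvN2 : N₁ ≤ γ x (U x j) := le_trans hvN (le_of_lt (hγt x _))
      obtain ⟨hb1, hb2, hb3⟩ := hnx (γ x (U x j)) hvN2
      have c0 := hγt x (U x j)
      have c2 := hγt x (γ x (γ x (U x j)))
      have hblk1 : U x j ≤ Φ₁ x n (γ x (U x j)) := by omega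
      have hblk2 : Φ₁ x n (γ x (U x j)) < U x (j + 1) := by omega
      refine ⟨Φ₁ x n (γ x (U x j)), ⟨?_, hb2⟩, ?_⟩
      · show blockSet (U x) (γ x) (Φ₁ x n (γ x (U x j))) = false
        rw [blockSet_eq_decide (hUs x) (hUt x) hblk1 hblk2]
        exact decide_eq_false (by omega)
      · have h5 : m + 1 ≤ max (m + 1) N₁ := le_max_left _ _
        omega
end

section
/- There exists a Borel function λ : ℕ^ℕ → ℕ^ℕ such that: (1) λ is a homomorphism from =* to =*, i.e. f =* g implies λ(f) =* λ(g); (2) for every f, the sequence λ(f) is nondecreasing; and (3) for every f ∈ ℕ^ℕ and every j ∈ ℕ, the interval [λ(f)(j), λ(f)(j+1)) contains an interval of the form [n, f(n)), i.e. there exists n ∈ ℕ with λ(f)(j) ≤ n and f(n) ≤ λ(f)(j+1). -/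
open Filter

namespace BorelIntervalHom

/-- The set of values of `f` on `[s, ∞)`. -/
def valSet (f : ℕ → ℕ) (s : ℕ) : Set ℕ := {m | ∃ n, s ≤ n ∧ f n = m}

/-- The minimum of `f` on `[s, ∞)`. -/
noncomputable def mu (f : ℕ → ℕ) (s : ℕ) : ℕ := sInf (valSet f s)

lemma valSet_nonempty (f : ℕ → ℕ) (s : ℕ) : (valSet f s).Nonempty :=
  ⟨f s, s, le_rfl, rfl⟩

lemma mu_mem (f : ℕ → ℕ) (s : ℕ) : mu f s ∈ valSet f s :=
  Nat.sInf_mem (valSet_nonempty f s)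

lemma mu_le (f : ℕ → ℕ) {s n : ℕ} (h : s ≤ n) : mu f s ≤ f n :=
  Nat.sInf_le ⟨n, h, rfl⟩

lemma mu_mono (f : ℕ → ℕ) : Monotone (mu f) := by
  intro s t hst
  obtain ⟨n, hn, hfn⟩ := mu_mem f t
  calc mu f s ≤ f n := mu_le f (hst.trans hn)
    _ = mu f t := hfn

/-- One step of the construction. -/
noncomputable def psi (f : ℕ → ℕ) (s : ℕ) : ℕ := max (s + 1) (mu f s)

lemma psi_mono (f : ℕ → ℕ) : Monotone (psi f) := fun s t h =>
  max_le_max (by omega) (mu_mono f h)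

lemma lt_psi (f : ℕ → ℕ) (s : ℕ) : s < psi f s :=
  lt_of_lt_of_le (Nat.lt_succ_self s) (le_max_left _ _)

/-- The function `λ`. -/
noncomputable def lam (f : ℕ → ℕ) (j : ℕ) : ℕ := (psi f)^[j] j

lemma mu_le_iff (f : ℕ → ℕ) (s v : ℕ) :
    mu f s ≤ v ↔ ∃ n, s ≤ n ∧ f n ≤ v := by
  constructor
  · intro h
    obtain ⟨n, hn, hfn⟩ := mu_mem f s
    exact ⟨n, hn, by omega⟩
  · rintro ⟨n, hn, hfn⟩
    exact (mu_le f hn).trans hfn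

lemma measurableSet_mu_le (s v : ℕ) :
    MeasurableSet {f : ℕ → ℕ | mu f s ≤ v} := by
  have : {f : ℕ → ℕ | mu f s ≤ v} = ⋃ n : ℕ, {f : ℕ → ℕ | f (s + n) ≤ v} := by
    ext f
    simp only [Set.mem_setOf_eq, Set.mem_iUnion, mu_le_iff]
    constructor
    · rintro ⟨n, hn, hfn⟩
      exact ⟨n - s, by rwa [Nat.add_sub_cancel' hn]⟩
    · rintro ⟨n, hn⟩
      exact ⟨s + n, Nat.le_add_right _ _, hn⟩
  rw [this]
  exact MeasurableSet.iUnion fun n =>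
    (measurable_pi_apply (s + n)) measurableSet_Iic

lemma measurable_mu (s : ℕ) : Measurable (fun f : ℕ → ℕ => mu f s) := by
  apply measurable_to_countable'
  intro v
  match v with
  | 0 =>
    have : (fun f : ℕ → ℕ => mu f s) ⁻¹' {0} = {f : ℕ → ℕ | mu f s ≤ 0} := by
      ext f; simp [Nat.le_zero]
    rw [this]; exact measurableSet_mu_le s 0
  | (w + 1) =>
    have : (fun f : ℕ → ℕ => mu f s) ⁻¹' {w + 1}
        = {f : ℕ → ℕ | mu f s ≤ w + 1} \ {f : ℕ → ℕ | mu f s ≤ w} := by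
      ext f
      simp only [Set.mem_preimage, Set.mem_singleton_iff, Set.mem_diff,
        Set.mem_setOf_eq]
      omega
    rw [this]
    exact (measurableSet_mu_le s (w + 1)).diff (measurableSet_mu_le s w)

lemma measurable_psi_comp {σ : (ℕ → ℕ) → ℕ} (hσ : Measurable σ) :
    Measurable (fun f : ℕ → ℕ => psi f (σ f)) := by
  apply measurable_to_countable'
  intro v
  have : (fun f : ℕ → ℕ => psi f (σ f)) ⁻¹' {v}
      = ⋃ s : ℕ, ({f : ℕ → ℕ | σ f = s} ∩ {f : ℕ → ℕ | psi f s = v}) := by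
    ext f
    simp only [Set.mem_preimage, Set.mem_singleton_iff, Set.mem_iUnion,
      Set.mem_inter_iff, Set.mem_setOf_eq]
    constructor
    · intro h; exact ⟨σ f, rfl, by rw [← h]⟩
    · rintro ⟨s, hs, hv⟩; rw [hs]; exact hv
  rw [this]
  refine MeasurableSet.iUnion fun s => MeasurableSet.inter ?_ ?_
  · exact hσ (measurableSet_singleton s)
  · have : Measurable (fun f : ℕ → ℕ => psi f s) := by
      have h1 : Measurable (fun m : ℕ => max (s + 1) m) := measurable_from_top
      exact h1.comp (measurable_mu s)
    exact this (measurableSet_singleton v)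

lemma measurable_iterate (k a : ℕ) :
    Measurable (fun f : ℕ → ℕ => (psi f)^[k] a) := by
  induction k with
  | zero => simp only [Function.iterate_zero, id]; exact measurable_const
  | succ k ih =>
    have : (fun f : ℕ → ℕ => (psi f)^[k + 1] a)
        = fun f : ℕ → ℕ => psi f ((psi f)^[k] a) := by
      ext f; rw [Function.iterate_succ_apply']
    rw [this]
    exact measurable_psi_comp ih

lemma measurable_lam : Measurable lam := by
  apply measurable_pi_lambda
  intro j
  exact measurable_iterate j j

lemma mu_congr {f g : ℕ → ℕ} {N : ℕ} (h : ∀ n, N ≤ n → f n = g n)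
    {s : ℕ} (hs : N ≤ s) : mu f s = mu g s := by
  unfold mu
  congr 1
  ext m
  constructor
  · rintro ⟨n, hn, rfl⟩; exact ⟨n, hn, (h n (hs.trans hn)).symm⟩
  · rintro ⟨n, hn, rfl⟩; exact ⟨n, hn, h n (hs.trans hn)⟩

lemma psi_congr {f g : ℕ → ℕ} {N : ℕ} (h : ∀ n, N ≤ n → f n = g n)
    {s : ℕ} (hs : N ≤ s) : psi f s = psi g s := by
  unfold psi; rw [mu_congr h hs]

lemma iterate_congr {f g : ℕ → ℕ} {N : ℕ} (h : ∀ n, N ≤ n → f n = g n)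
    (k : ℕ) : ∀ a, N ≤ a → (psi f)^[k] a = (psi g)^[k] a := by
  induction k with
  | zero => intro a _; simp
  | succ k ih =>
    intro a ha
    rw [Function.iterate_succ_apply, Function.iterate_succ_apply,
      psi_congr h ha]
    exact ih (psi g a) (ha.trans (lt_psi g a).le)

lemma lam_mono (f : ℕ → ℕ) : Monotone (lam f) := by
  apply monotone_nat_of_le_succ
  intro j
  have h1 : (psi f)^[j + 1] j ≤ (psi f)^[j + 1] (j + 1) :=
    (psi_mono f).iterate (j + 1) (Nat.le_succ j)
  have h2 : lam f j ≤ (psi f)^[j + 1] j := by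
    rw [Function.iterate_succ_apply']
    exact (lt_psi f _).le
  exact h2.trans h1

lemma lam_interval (f : ℕ → ℕ) (j : ℕ) :
    ∃ n, lam f j ≤ n ∧ f n ≤ lam f (j + 1) := by
  obtain ⟨n, hn, hfn⟩ := mu_mem f (lam f j)
  refine ⟨n, hn, ?_⟩
  have h1 : f n = mu f (lam f j) := hfn
  have h2 : mu f (lam f j) ≤ psi f (lam f j) := le_max_right _ _
  have h3 : psi f (lam f j) = (psi f)^[j + 1] j := by
    rw [Function.iterate_succ_apply']; rfl
  have h4 : (psi f)^[j + 1] j ≤ (psi f)^[j + 1] (j + 1) :=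
    (psi_mono f).iterate (j + 1) (Nat.le_succ j)
  calc f n = mu f (lam f j) := h1
    _ ≤ psi f (lam f j) := h2
    _ = (psi f)^[j + 1] j := h3
    _ ≤ lam f (j + 1) := h4

lemma lam_evEq {f g : ℕ → ℕ} (h : EvEq f g) : EvEq (lam f) (lam g) := by
  obtain ⟨N, hN⟩ := Filter.eventually_atTop.mp h
  apply Filter.eventually_atTop.mpr
  refine ⟨N, fun j hj => ?_⟩
  exact iterate_congr hN j j hj

end BorelIntervalHom

/-- There is a Borel `λ : ℕ^ℕ → ℕ^ℕ` which is a homomorphism from `=*` to `=*`,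
takes nondecreasing values, and such that every interval
`[λ(f)(j), λ(f)(j+1))` contains an interval of the form `[n, f(n))`, i.e.
there is `n` with `λ(f)(j) ≤ n` and `f(n) ≤ λ(f)(j+1)`. -/
theorem exists_borel_interval_homomorphism :
    ∃ lam : (ℕ → ℕ) → ℕ → ℕ, Measurable lam ∧
      (∀ f g, EvEq f g → EvEq (lam f) (lam g)) ∧
      (∀ f, Monotone (lam f)) ∧
      (∀ f j, ∃ n, lam f j ≤ n ∧ f n ≤ lam f (j + 1)) := by
  exact ⟨BorelIntervalHom.lam, BorelIntervalHom.measurable_lam,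
    fun f g h => BorelIntervalHom.lam_evEq h,
    BorelIntervalHom.lam_mono, BorelIntervalHom.lam_interval⟩
end

section
/- If a countable Borel equivalence relation E on a standard Borel space X has property 𝗋 (Borel reapable), then E has property 𝗂 (Borel non-maximal-independent). -/
open Filter

/-- A family of infinite subsets of `ℕ` is independent if for any two disjoint
finite subfamilies `s`, `t`, the set of `k` lying in every member of `s` and in
the complement of every member of `t` is infinite. -/
def IndepFam (F : Set (ℕ → Bool)) : Prop :=
  ∀ s t : Finset (ℕ → Bool), ↑s ⊆ F → ↑t ⊆ F → Disjoint s t →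
    {k | (∀ A ∈ s, A k = true) ∧ ∀ B ∈ t, B k = false}.Infinite

/-- `E` has property `𝗂` (Borel non-maximal-independent). -/
def PropertyI {X : Type*} [MeasurableSpace X] (E : X → X → Prop) : Prop :=
  ∀ φ : X → ℕ → ℕ → Bool, Measurable φ → (∀ x n, IsInfSet (φ x n)) →
    (∀ x y, E x y → Set.range (φ x) = Set.range (φ y)) →
    (∀ x, IndepFam (Set.range (φ x))) →
    ∃ ψ : X → ℕ → Bool, Measurable ψ ∧ (∀ x, IsInfSet (ψ x)) ∧
      (∀ x y, E x y → EvEqB (ψ x) (ψ y)) ∧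
      ∀ x, IndepFam (insert (ψ x) (Set.range (φ x))) ∧ ψ x ∉ Set.range (φ x)

open scoped Classical

/-- The Boolean combination determined by two finite families of subsets of `ℕ`. -/
noncomputable def comboS (S T : Finset (ℕ → Bool)) : ℕ → Bool :=
  fun k => decide ((∀ A ∈ S, A k = true) ∧ ∀ B ∈ T, B k = false)

lemma comboS_true {S T : Finset (ℕ → Bool)} {k : ℕ} :
    comboS S T k = true ↔ (∀ A ∈ S, A k = true) ∧ ∀ B ∈ T, B k = false := by
  simp [comboS]

lemma indep_comboS {F : Set (ℕ → Bool)} (hF : IndepFam F) {S T : Finset (ℕ → Bool)}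
    (hS : ↑S ⊆ F) (hT : ↑T ⊆ F) (hST : Disjoint S T) :
    {k | comboS S T k = true}.Infinite := by
  have h : {k | comboS S T k = true} =
      {k | (∀ A ∈ S, A k = true) ∧ ∀ B ∈ T, B k = false} := by
    ext k; exact comboS_true
  rw [h]
  exact hF S T hS hT hST

/-- The family of all (infinite) Boolean combinations of a countable family, with
a default repair for ill-behaved combinations. -/
noncomputable def PhiC (g : ℕ → ℕ → Bool) (m : ℕ) : ℕ → Bool :=
  if {k | comboS ((Denumerable.ofNat (Finset ℕ × Finset ℕ) m).1.image g)
      ((Denumerable.ofNat (Finset ℕ × Finset ℕ) m).2.image g) k = true}.Infinite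
  then comboS ((Denumerable.ofNat (Finset ℕ × Finset ℕ) m).1.image g)
      ((Denumerable.ofNat (Finset ℕ × Finset ℕ) m).2.image g)
  else comboS ((Denumerable.ofNat (Finset ℕ × Finset ℕ) m).1.image g) ∅

lemma image_subset_range (g : ℕ → ℕ → Bool) (u : Finset ℕ) :
    ↑(u.image g) ⊆ Set.range g := by
  intro A hA
  simp only [Finset.coe_image, Set.mem_image, Finset.mem_coe] at hA
  obtain ⟨n, -, rfl⟩ := hA
  exact ⟨n, rfl⟩

lemma exists_preimage_finset (g : ℕ → ℕ → Bool) (S : Finset (ℕ → Bool))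
    (hS : ↑S ⊆ Set.range g) : ∃ u : Finset ℕ, u.image g = S := by
  refine ⟨S.attach.image fun A => (hS A.2).choose, ?_⟩
  rw [Finset.image_image]
  have hgc : ∀ A : {x // x ∈ S}, g ((hS A.2).choose) = A.1 := fun A => (hS A.2).choose_spec
  ext A
  simp only [Finset.mem_image, Finset.mem_attach, true_and, Subtype.exists,
    Function.comp_apply]
  constructor
  · rintro ⟨a, ha, rfl⟩
    rw [hgc ⟨a, ha⟩]; exact ha
  · intro hA
    exact ⟨A, hA, hgc ⟨A, hA⟩⟩

lemma phiC_range (g : ℕ → ℕ → Bool) (hg : IndepFam (Set.range g)) :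
    Set.range (PhiC g) = {f | ∃ S T : Finset (ℕ → Bool), ↑S ⊆ Set.range g ∧
      ↑T ⊆ Set.range g ∧ {k | comboS S T k = true}.Infinite ∧ f = comboS S T} := by
  ext f
  constructor
  · rintro ⟨m, rfl⟩
    set p := Denumerable.ofNat (Finset ℕ × Finset ℕ) m with hp
    by_cases h : {k | comboS (p.1.image g) (p.2.image g) k = true}.Infinite
    · exact ⟨p.1.image g, p.2.image g, image_subset_range g p.1, image_subset_range g p.2,
        h, by rw [PhiC, ← hp, if_pos h]⟩
    · refine ⟨p.1.image g, ∅, image_subset_range g p.1, by simp, ?_,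
        by rw [PhiC, ← hp, if_neg h]⟩
      exact indep_comboS hg (image_subset_range g p.1) (by simp)
        (Finset.disjoint_empty_right _)
  · rintro ⟨S, T, hS, hT, hInf, rfl⟩
    obtain ⟨u, hu⟩ := exists_preimage_finset g S hS
    obtain ⟨v, hv⟩ := exists_preimage_finset g T hT
    obtain ⟨m, hm⟩ : ∃ m, Denumerable.ofNat (Finset ℕ × Finset ℕ) m = (u, v) :=
      ⟨@Encodable.encode _ Denumerable.toEncodable _, Denumerable.ofNat_encode _⟩
    refine ⟨m, ?_⟩
    rw [PhiC, hm]
    simp only [hu, hv, hInf, if_true]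

lemma phiC_infinite (g : ℕ → ℕ → Bool) (hg : IndepFam (Set.range g)) (m : ℕ) :
    IsInfSet (PhiC g m) := by
  unfold PhiC IsInfSet
  set p := Denumerable.ofNat (Finset ℕ × Finset ℕ) m with hp
  by_cases h : {k | comboS (p.1.image g) (p.2.image g) k = true}.Infinite
  · rw [if_pos h]; exact h
  · rw [if_neg h]
    exact indep_comboS hg (image_subset_range g p.1) (by simp)
      (Finset.disjoint_empty_right _)

/-- If a countable Borel equivalence relation on a standard Borel space has
property `𝗋`, then it has property `𝗂`. -/
theorem propertyI_of_propertyR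
    {X : Type*} [MeasurableSpace X] [StandardBorelSpace X]
    (E : X → X → Prop) (hEq : Equivalence E)
    (hBorel : MeasurableSet {p : X × X | E p.1 p.2})
    (hCtble : ∀ x, {y | E x y}.Countable)
    (hR : PropertyR E) : PropertyI E := by
  intro φ hφ hInfφ hRange hIndep
  set Φ : X → ℕ → ℕ → Bool := fun x => PhiC (φ x) with hΦdef
  have hbase : ∀ (j l : ℕ) (b : Bool), MeasurableSet {x : X | φ x j l = b} := by
    intro j l b
    have hm : Measurable fun x => φ x j l :=
      (measurable_pi_apply l).comp ((measurable_pi_apply j).comp hφ)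
    exact hm (by trivial : MeasurableSet {b})
  have hcombo : ∀ (u v : Finset ℕ) (l : ℕ),
      MeasurableSet {x : X | comboS (u.image (φ x)) (v.image (φ x)) l = true} := by
    intro u v l
    have heq : {x : X | comboS (u.image (φ x)) (v.image (φ x)) l = true} =
        (⋂ j ∈ u, {x : X | φ x j l = true}) ∩ ⋂ j ∈ v, {x : X | φ x j l = false} := by
      ext x
      simp [comboS_true, Finset.forall_mem_image]
    rw [heq]
    exact (MeasurableSet.biInter u.countable_toSet fun j _ => hbase j l true).inter
      (MeasurableSet.biInter v.countable_toSet fun j _ => hbase j l false)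
  have hΦmeas : Measurable Φ := by
    apply measurable_pi_lambda
    intro m
    apply measurable_pi_lambda
    intro k
    set p := Denumerable.ofNat (Finset ℕ × Finset ℕ) m with hp
    have hcond : MeasurableSet
        {x : X | {l | comboS (p.1.image (φ x)) (p.2.image (φ x)) l = true}.Infinite} := by
      have heq : {x : X | {l | comboS (p.1.image (φ x)) (p.2.image (φ x)) l = true}.Infinite} =
          ⋂ N : ℕ, ⋃ l : ℕ, ⋃ _ : N ≤ l,
            {x : X | comboS (p.1.image (φ x)) (p.2.image (φ x)) l = true} := by
        ext x
        simp only [Set.mem_setOf_eq, Set.mem_iInter, Set.mem_iUnion]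
        rw [← Nat.frequently_atTop_iff_infinite, Filter.frequently_atTop]
        exact ⟨fun h N => (h N).imp fun l ⟨h1, h2⟩ => ⟨h1, h2⟩,
          fun h N => (h N).imp fun l ⟨h1, h2⟩ => ⟨h1, h2⟩⟩
      rw [heq]
      exact MeasurableSet.iInter fun N => MeasurableSet.iUnion fun l =>
        MeasurableSet.iUnion fun _ => hcombo p.1 p.2 l
    have hdec : ∀ (u v : Finset ℕ), Measurable fun x : X =>
        comboS (u.image (φ x)) (v.image (φ x)) k := by
      intro u v
      have heq : (fun x : X => comboS (u.image (φ x)) (v.image (φ x)) k) = fun x =>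
          if comboS (u.image (φ x)) (v.image (φ x)) k = true then true else false := by
        funext x
        by_cases h : comboS (u.image (φ x)) (v.image (φ x)) k = true <;> simp [h]
      rw [heq]
      exact Measurable.ite (hcombo u v k) measurable_const measurable_const
    have hfun : (fun x => Φ x m k) = fun x =>
        if {l | comboS (p.1.image (φ x)) (p.2.image (φ x)) l = true}.Infinite
        then comboS (p.1.image (φ x)) (p.2.image (φ x)) k
        else comboS (p.1.image (φ x)) ∅ k := by
      funext x
      rw [hΦdef]
      simp only [PhiC, ← hp]
      by_cases h : {l | comboS (p.1.image (φ x)) (p.2.image (φ x)) l = true}.Infinite <;>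
        simp [h]
    rw [hfun]
    have h2 : (fun x : X => comboS (p.1.image (φ x)) (∅ : Finset (ℕ → Bool)) k) =
        fun x : X => comboS (p.1.image (φ x)) ((∅ : Finset ℕ).image (φ x)) k := by
      simp
    exact Measurable.ite hcond (hdec p.1 p.2) (h2 ▸ hdec p.1 ∅)
  have hΦinf : ∀ x m, IsInfSet (Φ x m) := fun x m => phiC_infinite (φ x) (hIndep x) m
  have hΦrange : ∀ x y, E x y → Set.range (Φ x) = Set.range (Φ y) := by
    intro x y hxy
    rw [hΦdef]
    rw [phiC_range (φ x) (hIndep x), phiC_range (φ y) (hIndep y), hRange x y hxy]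
  obtain ⟨ψ, hψmeas, hψinf, hψhom, hψsplit⟩ := hR Φ hΦmeas hΦinf hΦrange
  refine ⟨ψ, hψmeas, hψinf, hψhom, fun x => ?_⟩
  have hnotmem : ψ x ∉ Set.range (φ x) := by
    rintro ⟨n, hn⟩
    have hcombo1 : comboS {φ x n} ∅ = φ x n := by
      funext k
      by_cases h : φ x n k = true
      · simp [comboS, h]
      · simp only [Bool.not_eq_true] at h
        simp [comboS, h]
    have hInf1 : {k | comboS {φ x n} (∅ : Finset (ℕ → Bool)) k = true}.Infinite := by
      rw [hcombo1]; exact hInfφ x n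
    have hmem : φ x n ∈ Set.range (Φ x) := by
      rw [hΦdef, phiC_range (φ x) (hIndep x)]
      exact ⟨{φ x n}, ∅, by simp, by simp, hInf1, hcombo1.symm⟩
    obtain ⟨m, hm⟩ := hmem
    have hinf2 := (hψsplit x m).2
    rw [hm, ← hn] at hinf2
    have hempty : ({k | φ x n k = false ∧ φ x n k = true} : Set ℕ) = ∅ := by
      ext k; simp only [Set.mem_setOf_eq, Set.mem_empty_iff_false, iff_false]
      rintro ⟨h1, h2⟩; rw [h1] at h2; exact Bool.false_ne_true h2
    rw [hempty] at hinf2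
    exact hinf2 Set.finite_empty
  refine ⟨?_, hnotmem⟩
  intro s t hs ht hst
  have hsub : ∀ (w : Finset (ℕ → Bool)), ↑w ⊆ insert (ψ x) (Set.range (φ x)) →
      ψ x ∉ w → ↑w ⊆ Set.range (φ x) := by
    intro w hw hψw A hA
    rcases hw hA with h | h
    · exact absurd (h ▸ hA) hψw
    · exact h
  have herase : ∀ (w : Finset (ℕ → Bool)), ↑w ⊆ insert (ψ x) (Set.range (φ x)) →
      ↑(w.erase (ψ x)) ⊆ Set.range (φ x) := by
    intro w hw A hA
    have hAne := Finset.ne_of_mem_erase (Finset.mem_coe.mp hA)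
    have hAmem := Finset.mem_of_mem_erase (Finset.mem_coe.mp hA)
    rcases hw hAmem with h | h
    · exact absurd h hAne
    · exact h
  by_cases hs' : ψ x ∈ s
  · have hψt : ψ x ∉ t := Finset.disjoint_left.mp hst hs'
    have hs'' : ↑(s.erase (ψ x)) ⊆ Set.range (φ x) := herase s hs
    have ht' : ↑t ⊆ Set.range (φ x) := hsub t ht hψt
    have hdisj : Disjoint (s.erase (ψ x)) t :=
      Finset.disjoint_left.mpr fun A hA =>
        Finset.disjoint_left.mp hst (Finset.mem_of_mem_erase hA)
    have hInf2 : {k | comboS (s.erase (ψ x)) t k = true}.Infinite :=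
      indep_comboS (hIndep x) hs'' ht' hdisj
    have hmem : comboS (s.erase (ψ x)) t ∈ Set.range (Φ x) := by
      rw [hΦdef, phiC_range (φ x) (hIndep x)]
      exact ⟨s.erase (ψ x), t, hs'', ht', hInf2, rfl⟩
    obtain ⟨m, hm⟩ := hmem
    have hsplit := (hψsplit x m).1
    rw [hm] at hsplit
    have hsets : {k | ψ x k = true ∧ comboS (s.erase (ψ x)) t k = true} =
        {k | (∀ A ∈ s, A k = true) ∧ ∀ B ∈ t, B k = false} := by
      ext k
      simp only [Set.mem_setOf_eq, comboS_true]
      constructor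
      · rintro ⟨h1, h2, h3⟩
        refine ⟨fun A hA => ?_, h3⟩
        by_cases hAe : A = ψ x
        · exact hAe ▸ h1
        · exact h2 A (Finset.mem_erase.mpr ⟨hAe, hA⟩)
      · rintro ⟨h1, h2⟩
        exact ⟨h1 _ hs', ⟨fun A hA => h1 A (Finset.mem_of_mem_erase hA), h2⟩⟩
    exact hsets ▸ hsplit
  · by_cases ht'' : ψ x ∈ t
    · have hs'' : ↑s ⊆ Set.range (φ x) := hsub s hs hs'
      have ht3 : ↑(t.erase (ψ x)) ⊆ Set.range (φ x) := herase t ht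
      have hdisj : Disjoint s (t.erase (ψ x)) :=
        Finset.disjoint_left.mpr fun A hA hA' =>
          Finset.disjoint_left.mp hst hA (Finset.mem_of_mem_erase hA')
      have hInf2 : {k | comboS s (t.erase (ψ x)) k = true}.Infinite :=
        indep_comboS (hIndep x) hs'' ht3 hdisj
      have hmem : comboS s (t.erase (ψ x)) ∈ Set.range (Φ x) := by
        rw [hΦdef, phiC_range (φ x) (hIndep x)]
        exact ⟨s, t.erase (ψ x), hs'', ht3, hInf2, rfl⟩
      obtain ⟨m, hm⟩ := hmem
      have hsplit := (hψsplit x m).2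
      rw [hm] at hsplit
      have hsets : {k | ψ x k = false ∧ comboS s (t.erase (ψ x)) k = true} =
          {k | (∀ A ∈ s, A k = true) ∧ ∀ B ∈ t, B k = false} := by
        ext k
        simp only [Set.mem_setOf_eq, comboS_true]
        constructor
        · rintro ⟨h1, h2, h3⟩
          refine ⟨h2, fun B hB => ?_⟩
          by_cases hBe : B = ψ x
          · exact hBe ▸ h1
          · exact h3 B (Finset.mem_erase.mpr ⟨hBe, hB⟩)
        · rintro ⟨h1, h2⟩
          exact ⟨h2 _ ht'', ⟨h1, fun B hB => h2 B (Finset.mem_of_mem_erase hB)⟩⟩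
      exact hsets ▸ hsplit
    · exact hIndep x s t (hsub s hs hs') (hsub t ht ht'') hst
end
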